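/- arXiv:2404.03895 — 9 statements merged into one kernel-verified Lean document; each statement's English description precedes it below -/
import Mathlib

section
/- Let G be a finite group and H a non-trivial proper normal subgroup of G. The normal subgroup based power graph Γ_H(G) is a complete graph if and only if the quotient group G/H is a cyclic p-group for some prime p. -/
/-- The vertex set of the normal subgroup based power graph: `(G \ H) ∪ {e}`. -/
def nsbVertexSet {G : Type*} [Group G] (H : Subgroup G) : Set G :=
  {x | x ∉ H} ∪ {1}

/-- The normal subgroup based power graph `Γ_H(G)`: vertices are `(G \ H) ∪ {e}` and two
distinct vertices `a`, `b` are adjacent iff `aH = b^m H` or `bH = a^n H` for some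
positive integers `m`, `n`. -/
def nsbPowerGraph (G : Type*) [Group G] (H : Subgroup G) :
    SimpleGraph (nsbVertexSet H) where
  Adj a b := (a : G) ≠ (b : G) ∧
    ((∃ m : ℕ, 0 < m ∧ (QuotientGroup.mk (a : G) : G ⧸ H) = QuotientGroup.mk ((b : G) ^ m)) ∨
     (∃ n : ℕ, 0 < n ∧ (QuotientGroup.mk (b : G) : G ⧸ H) = QuotientGroup.mk ((a : G) ^ n)))
  symm := ⟨fun a b ⟨hne, h⟩ => ⟨hne.symm, h.symm⟩⟩
  loopless := ⟨fun a ⟨hne, _⟩ => hne rfl⟩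

/-- The power graph of a group: two distinct elements are adjacent iff one is a positive
power of the other. -/
def powerGraph (K : Type*) [Group K] : SimpleGraph K where
  Adj x y := x ≠ y ∧ ((∃ m : ℕ, 0 < m ∧ x = y ^ m) ∨ (∃ n : ℕ, 0 < n ∧ y = x ^ n))
  symm := ⟨fun x y ⟨hne, h⟩ => ⟨hne.symm, h.symm⟩⟩
  loopless := ⟨fun x ⟨hne, _⟩ => hne rfl⟩

/-- The complete graph `K_n`. -/
def kGraph (n : ℕ) : SimpleGraph (Fin n) := ⊤

/-- The disjoint union `mK_n` of `m` copies of the complete graph `K_n`. -/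
def unionKGraph (m n : ℕ) : SimpleGraph (Fin m × Fin n) where
  Adj x y := x.1 = y.1 ∧ x.2 ≠ y.2
  symm := ⟨fun x y ⟨h1, h2⟩ => ⟨h1.symm, h2.symm⟩⟩
  loopless := ⟨fun x ⟨_, h⟩ => h rfl⟩

/-- The join `Γ₁ ∨ Γ₂` of two graphs: their disjoint union together with all edges
between the two parts. -/
def graphJoin {α β : Type*} (G : SimpleGraph α) (H : SimpleGraph β) :
    SimpleGraph (α ⊕ β) where
  Adj u v := match u, v with
    | Sum.inl u, Sum.inl v => G.Adj u v
    | Sum.inr u, Sum.inr v => H.Adj u v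
    | _, _ => True
  symm := ⟨fun u v => match u, v with
    | Sum.inl u, Sum.inl v => G.adj_symm
    | Sum.inr u, Sum.inr v => H.adj_symm
    | Sum.inl _, Sum.inr _ | Sum.inr _, Sum.inl _ => fun _ => trivial⟩
  loopless := ⟨fun u => by cases u <;> simp [SimpleGraph.irrefl]⟩

open Subgroup

/-- In a finite cyclic group, if `orderOf x ∣ orderOf y` then `x` is a power of `y`. -/
lemma mem_zpowers_of_orderOf_dvd {K : Type*} [Group K] [Finite K] [IsCyclic K]
    {x y : K} (h : orderOf x ∣ orderOf y) : x ∈ Subgroup.zpowers y := by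
  obtain ⟨g, hg⟩ := IsCyclic.exists_generator (α := K)
  have hn : orderOf g = Nat.card K := orderOf_eq_card_of_forall_mem_zpowers hg
  set n := Nat.card K with hndef
  have hnpos : 0 < n := Nat.card_pos
  obtain ⟨i, (hi : g ^ i = x)⟩ := mem_powers_iff_mem_zpowers.mpr (hg x)
  obtain ⟨j, (hj : g ^ j = y)⟩ := mem_powers_iff_mem_zpowers.mpr (hg y)
  set d1 := n.gcd i with hd1def
  set d2 := n.gcd j with hd2def
  have hd1 : d1 ∣ n := Nat.gcd_dvd_left n i
  have hd2 : d2 ∣ n := Nat.gcd_dvd_left n j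
  have hd1pos : 0 < d1 := Nat.gcd_pos_of_pos_left i hnpos
  have hd2pos : 0 < d2 := Nat.gcd_pos_of_pos_left j hnpos
  have h' : n / d1 ∣ n / d2 := by
    rw [← hi, ← hj, orderOf_pow, orderOf_pow, hn] at h
    exact h
  have hnd1pos : 0 < n / d1 := Nat.div_pos (Nat.le_of_dvd hnpos hd1) hd1pos
  obtain ⟨t, ht⟩ := h'
  have h21 : d2 ∣ d1 := by
    refine ⟨t, ?_⟩
    have hmm : (d2 * t) * (n / d1) = d1 * (n / d1) := by
      calc (d2 * t) * (n / d1) = d2 * (n / d1 * t) := by ring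
        _ = d2 * (n / d2) := by rw [← ht]
        _ = n := Nat.mul_div_cancel' hd2
        _ = d1 * (n / d1) := (Nat.mul_div_cancel' hd1).symm
    exact (Nat.eq_of_mul_eq_mul_right hnd1pos hmm).symm
  have key : d2 ∣ i := h21.trans (Nat.gcd_dvd_right n i)
  have hgn : g ^ (n : ℤ) = 1 := by
    rw [zpow_natCast, ← hn]; exact pow_orderOf_eq_one g
  have hbez : (d2 : ℤ) = n * Nat.gcdA n j + j * Nat.gcdB n j := Nat.gcd_eq_gcd_ab n j
  have hd2mem : g ^ d2 ∈ Subgroup.zpowers (g ^ j) := by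
    rw [Subgroup.mem_zpowers_iff]
    refine ⟨Nat.gcdB n j, ?_⟩
    have hcalc : g ^ (d2 : ℤ) = (g ^ j) ^ Nat.gcdB n j := by
      calc g ^ (d2 : ℤ) = g ^ ((n : ℤ) * Nat.gcdA n j + (j : ℤ) * Nat.gcdB n j) := by
            rw [← hbez]
        _ = (g ^ (n : ℤ)) ^ Nat.gcdA n j * (g ^ (j : ℤ)) ^ Nat.gcdB n j := by
            rw [zpow_add, zpow_mul, zpow_mul]
        _ = (g ^ j) ^ Nat.gcdB n j := by rw [hgn, one_zpow, one_mul, zpow_natCast]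
    rw [← hcalc, zpow_natCast]
  have hxi : x = (g ^ d2) ^ (i / d2) := by
    rw [← pow_mul, Nat.mul_div_cancel' key, hi]
  rw [hxi, ← hj]
  exact Subgroup.pow_mem _ hd2mem _

/-- Cyclic p-groups have "complete" power relations. -/
lemma powerRel_of_cyclic_pgroup {K : Type*} [Group K] [Finite K] (hc : IsCyclic K)
    {p : ℕ} (hp : p.Prime) (hP : IsPGroup p K) (x y : K) :
    (∃ m : ℕ, 0 < m ∧ x = y ^ m) ∨ (∃ n : ℕ, 0 < n ∧ y = x ^ n) := by
  obtain ⟨kx, hkx⟩ := hP x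
  obtain ⟨ky, hky⟩ := hP y
  obtain ⟨a, -, ha⟩ := (Nat.dvd_prime_pow hp).1 (orderOf_dvd_of_pow_eq_one hkx)
  obtain ⟨b, -, hb⟩ := (Nat.dvd_prime_pow hp).1 (orderOf_dvd_of_pow_eq_one hky)
  have fix : ∀ u v : K, u ∈ Subgroup.zpowers v → ∃ m : ℕ, 0 < m ∧ u = v ^ m := by
    intro u v huv
    obtain ⟨m, (hm : v ^ m = u)⟩ := mem_powers_iff_mem_zpowers.mpr huv
    refine ⟨m + orderOf v, by have := orderOf_pos v; omega, ?_⟩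
    rw [pow_add, pow_orderOf_eq_one, mul_one, hm]
  rcases le_total a b with hab | hab
  · left
    exact fix x y (mem_zpowers_of_orderOf_dvd (by rw [ha, hb]; exact pow_dvd_pow p hab))
  · right
    exact fix y x (mem_zpowers_of_orderOf_dvd (by rw [ha, hb]; exact pow_dvd_pow p hab))

/-- If every two elements are comparable under the power relation, the group is cyclic. -/
lemma isCyclic_of_powerRel {K : Type*} [Group K] [Finite K]
    (h : ∀ x y : K, x ∈ Subgroup.zpowers y ∨ y ∈ Subgroup.zpowers x) : IsCyclic K := by
  cases nonempty_fintype K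
  obtain ⟨x, -, hx⟩ := Finset.exists_max_image (Finset.univ : Finset K) (fun k => orderOf k) ⟨1, Finset.mem_univ 1⟩
  refine ⟨x, fun y => ?_⟩
  rcases h y x with hy | hy
  · exact hy
  · have hle : Subgroup.zpowers x ≤ Subgroup.zpowers y := (Subgroup.zpowers_le).2 hy
    have hdvd : orderOf x ∣ orderOf y := by
      rw [← Nat.card_zpowers, ← Nat.card_zpowers]
      exact Subgroup.card_dvd_of_le hle
    have heq : Nat.card (Subgroup.zpowers y) ≤ Nat.card (Subgroup.zpowers x) := by
      rw [Nat.card_zpowers, Nat.card_zpowers]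
      exact hx y (Finset.mem_univ y)
    have heq2 := Subgroup.eq_of_le_of_card_ge hle heq
    show y ∈ Subgroup.zpowers x
    rw [heq2]
    exact Subgroup.mem_zpowers y

/-- If every two elements are comparable under the power relation, the group is a p-group. -/
lemma isPGroup_of_powerRel {K : Type*} [Group K] [Finite K]
    (h : ∀ x y : K, x ∈ Subgroup.zpowers y ∨ y ∈ Subgroup.zpowers x) :
    ∃ p : ℕ, p.Prime ∧ IsPGroup p K := by
  cases nonempty_fintype K
  set n := Fintype.card K with hn
  by_cases h1 : n = 1
  · exact ⟨2, Nat.prime_two, IsPGroup.of_card (by rw [Nat.card_eq_fintype_card, ← hn, h1, pow_zero])⟩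
  · refine ⟨n.minFac, Nat.minFac_prime h1, ?_⟩
    have hq : ∀ q : ℕ, q.Prime → q ∣ n → q = n.minFac := by
      intro q hq hqd
      by_contra hne
      have : Fact q.Prime := ⟨hq⟩
      have : Fact (n.minFac).Prime := ⟨Nat.minFac_prime h1⟩
      obtain ⟨a, ha⟩ := exists_prime_orderOf_dvd_card q hqd
      obtain ⟨b, hb⟩ := exists_prime_orderOf_dvd_card n.minFac (Nat.minFac_dvd n)
      have dvd_of_mem : ∀ u v : K, u ∈ Subgroup.zpowers v → orderOf u ∣ orderOf v := by
        intro u v huv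
        rw [← Nat.card_zpowers, ← Nat.card_zpowers]
        exact Subgroup.card_dvd_of_le ((Subgroup.zpowers_le).2 huv)
      rcases h a b with hab | hab
      · have := dvd_of_mem a b hab
        rw [ha, hb] at this
        exact hne ((Nat.prime_dvd_prime_iff_eq hq (Nat.minFac_prime h1)).1 this)
      · have := dvd_of_mem b a hab
        rw [ha, hb] at this
        exact hne (((Nat.prime_dvd_prime_iff_eq (Nat.minFac_prime h1) hq).1 this).symm)
    have hn0 : n ≠ 0 := by
      rw [hn]; exact Fintype.card_ne_zero
    have hcard : n = n.minFac ^ n.primeFactorsList.length :=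
      Nat.eq_prime_pow_of_unique_prime_dvd hn0 (fun {d} hd hdn => hq d hd hdn)
    exact IsPGroup.of_card (by rw [Nat.card_eq_fintype_card, ← hn]; exact hcard)

/-- For a non-trivial proper normal subgroup `H` of a finite group `G`,
`Γ_H(G)` is complete iff `G/H` is a cyclic `p`-group for some prime `p`. -/
theorem statement_2 {G : Type*} [Group G] [Fintype G] (H : Subgroup G) [H.Normal]
    (hnontriv : H ≠ ⊥) (hproper : H ≠ ⊤) :
    nsbPowerGraph G H = ⊤ ↔
      (IsCyclic (G ⧸ H) ∧ ∃ p : ℕ, p.Prime ∧ IsPGroup p (G ⧸ H)) := by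
  constructor
  · intro hcomp
    have hrel : ∀ x y : G ⧸ H, x ∈ Subgroup.zpowers y ∨ y ∈ Subgroup.zpowers x := by
      intro x y
      by_cases hxy : x = y
      · left; exact hxy ▸ Subgroup.mem_zpowers y
      by_cases hx1 : x = 1
      · left; exact hx1 ▸ Subgroup.one_mem _
      by_cases hy1 : y = 1
      · right; exact hy1 ▸ Subgroup.one_mem _
      obtain ⟨a, rfl⟩ := QuotientGroup.mk_surjective x
      obtain ⟨b, rfl⟩ := QuotientGroup.mk_surjective y
      have haH : a ∉ H := fun hmem => hx1 ((QuotientGroup.eq_one_iff a).2 hmem)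
      have hbH : b ∉ H := fun hmem => hy1 ((QuotientGroup.eq_one_iff b).2 hmem)
      have hamem : a ∈ nsbVertexSet H := Or.inl haH
      have hbmem : b ∈ nsbVertexSet H := Or.inl hbH
      have hne : (⟨a, hamem⟩ : nsbVertexSet H) ≠ ⟨b, hbmem⟩ := by
        intro hEq
        exact hxy (congrArg _ (congrArg Subtype.val hEq))
      have hadj : (nsbPowerGraph G H).Adj ⟨a, hamem⟩ ⟨b, hbmem⟩ := by
        rw [hcomp]
        simpa using hne
      rcases hadj.2 with ⟨m, -, hm⟩ | ⟨n, -, hn⟩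
      · left
        rw [show ((QuotientGroup.mk a : G ⧸ H)) = QuotientGroup.mk (b ^ m) from hm,
          QuotientGroup.mk_pow]
        exact Subgroup.pow_mem _ (Subgroup.mem_zpowers _) m
      · right
        rw [show ((QuotientGroup.mk b : G ⧸ H)) = QuotientGroup.mk (a ^ n) from hn,
          QuotientGroup.mk_pow]
        exact Subgroup.pow_mem _ (Subgroup.mem_zpowers _) n
    exact ⟨isCyclic_of_powerRel hrel, isPGroup_of_powerRel hrel⟩
  · rintro ⟨hc, p, hp, hP⟩
    ext va vb
    simp only [SimpleGraph.top_adj]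
    constructor
    · intro hadj
      exact fun hEq => hadj.1 (congrArg Subtype.val hEq)
    · intro hne
      have hvalne : (va : G) ≠ (vb : G) := fun h => hne (Subtype.ext h)
      refine ⟨hvalne, ?_⟩
      by_cases hq : (QuotientGroup.mk (va : G) : G ⧸ H) = QuotientGroup.mk (vb : G)
      · left
        exact ⟨1, one_pos, by simpa using hq⟩
      · rcases powerRel_of_cyclic_pgroup hc hp hP (QuotientGroup.mk (va : G))
          (QuotientGroup.mk (vb : G)) with ⟨m, hm, h⟩ | ⟨n, hn, h⟩
        · left
          exact ⟨m, hm, by rw [h, QuotientGroup.mk_pow]⟩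
        · right
          exact ⟨n, hn, by rw [h, QuotientGroup.mk_pow]⟩
end

section
/- Let p be a prime and let G be a finite p-group of exponent p^2 containing exactly one cyclic subgroup of order p^2. Then: (i) if p = 2, G is isomorphic to the cyclic group Z_4 or to the dihedral group D_8 of order 8; (ii) if p > 2, G is isomorphic to the cyclic group Z_{p^2}. -/
private def triN : ℕ → ℕ
  | 0 => 0
  | n+1 => triN n + n

private lemma two_triN : ∀ n, 2 * triN n = n * (n - 1)
  | 0 => rfl
  | n+1 => by
    have ih := two_triN n
    simp only [triN, Nat.mul_add, ih, Nat.add_sub_cancel]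
    cases n with
    | zero => rfl
    | succ m => simp only [Nat.succ_sub_one]; ring

private lemma p_dvd_triN (p : ℕ) (hp : p.Prime) (hodd : p ≠ 2) : p ∣ triN p := by
  have h2 : p ∣ 2 * triN p := by rw [two_triN]; exact Dvd.intro _ rfl
  rcases (hp.dvd_mul).mp h2 with h | h
  · exact absurd ((Nat.prime_dvd_prime_iff_eq hp Nat.prime_two).mp h) hodd
  · exact h

private lemma semiconj_pow_aux {G : Type*} [Group G] (g z c : G) (hcz : Commute c z)
    (h : z * g = g * c * z) : ∀ n : ℕ, z ^ n * g = g * c ^ n * z ^ n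
  | 0 => by simp
  | n+1 => by
    have ih := semiconj_pow_aux g z c hcz h n
    calc z ^ (n+1) * g = z * (z ^ n * g) := by rw [pow_succ', mul_assoc]
    _ = z * (g * c ^ n * z ^ n) := by rw [ih]
    _ = (z * g) * c ^ n * z ^ n := by simp [mul_assoc]
    _ = g * c * (z * c ^ n) * z ^ n := by rw [h]; simp [mul_assoc]
    _ = g * c * (c ^ n * z) * z ^ n := by rw [(hcz.pow_left n).eq]
    _ = g * c ^ (n+1) * z ^ (n+1) := by rw [pow_succ' c, pow_succ' z]; simp [mul_assoc]

private lemma mul_pow_triN {G : Type*} [Group G] (g z c : G) (hcg : Commute c g)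
    (hcz : Commute c z) (h : z * g = g * c * z) :
    ∀ n : ℕ, (g * z) ^ n = g ^ n * c ^ triN n * z ^ n
  | 0 => by simp [triN]
  | n+1 => by
    have ih := mul_pow_triN g z c hcg hcz h n
    calc (g * z) ^ (n+1) = (g * z) ^ n * (g * z) := pow_succ _ _
    _ = g ^ n * c ^ triN n * (z ^ n * g) * z := by rw [ih]; simp [mul_assoc]
    _ = g ^ n * c ^ triN n * (g * c ^ n * z ^ n) * z := by
        rw [semiconj_pow_aux g z c hcz h n]
    _ = g ^ n * (c ^ triN n * g) * c ^ n * (z ^ n * z) := by simp [mul_assoc]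
    _ = g ^ n * (g * c ^ triN n) * c ^ n * (z ^ n * z) := by rw [(hcg.pow_left _).eq]
    _ = g ^ (n+1) * c ^ (triN n + n) * z ^ (n+1) := by
        rw [pow_succ g, pow_succ z, pow_add]; simp [mul_assoc]
    _ = g ^ (n+1) * c ^ triN (n+1) * z ^ (n+1) := rfl

private lemma conj_pow_iter {G : Type*} [Group G] (z g : G) (k : ℤ) (h : z * g * z⁻¹ = g ^ k) :
    ∀ n : ℕ, z ^ n * g * (z ^ n)⁻¹ = g ^ (k ^ n)
  | 0 => by simp
  | n+1 => by
    have ih := conj_pow_iter z g k h n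
    calc z ^ (n+1) * g * (z ^ (n+1))⁻¹ = z * (z ^ n * g * (z ^ n)⁻¹) * z⁻¹ := by
          rw [pow_succ']; simp [mul_assoc]
    _ = z * g ^ (k ^ n) * z⁻¹ := by rw [ih]
    _ = (z * g * z⁻¹) ^ (k ^ n) := by rw [conj_zpow]
    _ = g ^ (k * k ^ n) := by rw [h, ← zpow_mul]
    _ = g ^ (k ^ (n+1)) := by rw [pow_succ']

private lemma keyNT (p : ℕ) (hp : p.Prime) (k : ℤ) (h : k ^ p ≡ 1 [ZMOD ((p^2 : ℕ) : ℤ)]) :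
    (p : ℤ) ∣ k - 1 := by
  haveI := Fact.mk hp
  have hd : ((p : ℤ)) ∣ ((p^2 : ℕ) : ℤ) := by push_cast; exact Dvd.intro p (by ring)
  have h2 : k ^ p ≡ 1 [ZMOD (p : ℤ)] := h.of_dvd hd
  have h3 : ((k ^ p : ℤ) : ZMod p) = ((1 : ℤ) : ZMod p) := (ZMod.intCast_eq_intCast_iff _ _ _).mpr h2
  push_cast at h3
  rw [ZMod.pow_card] at h3
  have h4 : ((k : ℤ) : ZMod p) = ((1 : ℤ) : ZMod p) := by push_cast; exact h3
  have h5 := (ZMod.intCast_eq_intCast_iff _ _ _).mp h4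
  exact (Int.modEq_iff_dvd.mp h5.symm)

private lemma zpowers_isCyclic {G : Type*} [Group G] (g : G) :
    IsCyclic (Subgroup.zpowers g) := by
  refine ⟨⟨⟨g, Subgroup.mem_zpowers g⟩, fun x => ?_⟩⟩
  obtain ⟨k, hk⟩ := Subgroup.mem_zpowers_iff.mp x.2
  refine Subgroup.mem_zpowers_iff.mpr ⟨k, ?_⟩
  apply Subtype.ext
  simpa using hk

/-- A finite `p`-group of exponent `p²` with exactly one cyclic subgroup of
order `p²` is `Z₄` or `D₈` when `p = 2`, and `Z_{p²}` when `p > 2`. -/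
theorem statement_3 {G : Type*} [Group G] [Fintype G] (p : ℕ) (hp : p.Prime)
    (hpG : IsPGroup p G) (hexp : Monoid.exponent G = p ^ 2)
    (huniq : ∃! K : Subgroup G, IsCyclic ↥K ∧ Nat.card ↥K = p ^ 2) :
    (p = 2 → (Nonempty (G ≃* Multiplicative (ZMod 4)) ∨ Nonempty (G ≃* DihedralGroup 4))) ∧
    (2 < p → Nonempty (G ≃* Multiplicative (ZMod (p ^ 2)))) := by
  obtain ⟨C, ⟨hCcyc, hCcard⟩, hCuniq⟩ := huniq
  have hp1 : 1 < p := hp.one_lt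
  -- there is an element of order p^2
  have hexists : ∃ g : G, orderOf g = p ^ 2 := by
    by_contra hcon
    push_neg at hcon
    have hdvd : Monoid.exponent G ∣ p := by
      rw [Monoid.exponent_dvd]
      intro z
      have h1 : orderOf z ∣ p ^ 2 := hexp ▸ Monoid.order_dvd_exponent z
      obtain ⟨m, hm, hzm⟩ := (Nat.dvd_prime_pow hp).mp h1
      interval_cases m
      · simp [hzm]
      · simp [hzm]
      · exact absurd hzm (hcon z)
    rw [hexp] at hdvd
    have := Nat.le_of_dvd (by omega) hdvd
    nlinarith
  obtain ⟨g, hg⟩ := hexists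
  have hCg : Subgroup.zpowers g = C :=
    hCuniq _ ⟨zpowers_isCyclic g, by rw [Nat.card_zpowers, hg]⟩
  subst hCg
  have hmemA : ∀ h : G, orderOf h = p ^ 2 → h ∈ Subgroup.zpowers g := by
    intro h hh
    have := hCuniq (Subgroup.zpowers h) ⟨zpowers_isCyclic h, by rw [Nat.card_zpowers, hh]⟩
    rw [← this]
    exact Subgroup.mem_zpowers h
  have horddvd : ∀ z : G, orderOf z ∣ p ^ 2 := fun z => hexp ▸ Monoid.order_dvd_exponent z
  have houtside : ∀ z : G, z ∉ Subgroup.zpowers g → z ^ p = 1 := by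
    intro z hz
    obtain ⟨m, hm, hzm⟩ := (Nat.dvd_prime_pow hp).mp (horddvd z)
    rw [← orderOf_dvd_iff_pow_eq_one]
    interval_cases m
    · rw [hzm]; simp
    · rw [hzm]; simp
    · exact absurd (hmemA z hzm) hz
  have hgpne : g ^ p ≠ 1 := by
    intro hone
    have hdvd := orderOf_dvd_iff_pow_eq_one.mpr hone
    rw [hg] at hdvd
    have := Nat.le_of_dvd (by omega) hdvd
    nlinarith
  have hordp2 : ∀ y : G, y ^ p ≠ 1 → orderOf y = p ^ 2 := by
    intro y hy
    obtain ⟨m, hm, hym⟩ := (Nat.dvd_prime_pow hp).mp (horddvd y)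
    interval_cases m
    · exfalso; apply hy; rw [← orderOf_dvd_iff_pow_eq_one, hym]; simp
    · exfalso; apply hy; rw [← orderOf_dvd_iff_pow_eq_one, hym, pow_one]
    · exact hym
  -- if all elements are powers of g, G is cyclic of order p^2
  have hcyc_case : (∀ z : G, z ∈ Subgroup.zpowers g) →
      Nonempty (G ≃* Multiplicative (ZMod (p ^ 2))) := by
    intro hall
    have hcyc : IsCyclic G := ⟨⟨g, hall⟩⟩
    have htop : Subgroup.zpowers g = ⊤ := Subgroup.eq_top_iff' _ |>.mpr hall
    have hcard : Nat.card G = p ^ 2 := by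
      rw [← Subgroup.card_top (G := G), ← htop, Nat.card_zpowers, hg]
    exact ⟨hcard ▸ (zmodCyclicMulEquiv hcyc).symm⟩
  -- odd p: everything is a power of g
  have hodd_top : p ≠ 2 → ∀ z : G, z ∈ Subgroup.zpowers g := by
    intro hpne z
    by_contra hz
    have hzp : z ^ p = 1 := houtside z hz
    have hconj_ord : orderOf (z * g * z⁻¹) = p ^ 2 := by
      have h1 := orderOf_injective (MulAut.conj z).toMonoidHom (MulEquiv.injective _) g
      simpa [MulAut.conj, hg] using h1
    obtain ⟨k, hk⟩ := Subgroup.mem_zpowers_iff.mp (hmemA _ hconj_ord)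
    -- hk : g ^ k = z * g * z⁻¹
    have hiter := conj_pow_iter z g k hk.symm p
    rw [hzp] at hiter
    simp only [one_mul, inv_one, mul_one] at hiter
    -- hiter : g = g ^ (k ^ p)
    have hmod : k ^ p ≡ 1 [ZMOD ((p ^ 2 : ℕ) : ℤ)] := by
      have h2 : g ^ (k ^ p) = g ^ (1 : ℤ) := by rw [← hiter, zpow_one]
      rw [zpow_eq_zpow_iff_modEq, hg] at h2
      exact h2
    have hdvd1 : (p : ℤ) ∣ k - 1 := keyNT p hp k hmod
    set c := g ^ (k - 1) with hc
    have hcg : Commute c g := ((Commute.refl g).zpow_left (k - 1))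
    have hgc : g * c = g ^ k := by
      rw [hc, ← zpow_one_add]
      congr 1
      ring
    have hczg : z * g = g * c * z := by
      rw [hgc, hk]
      group
    have hcz : Commute c z := by
      have h1 : z * c * z⁻¹ = (z * g * z⁻¹) ^ (k - 1) := by rw [hc, conj_zpow]
      have h2 : (z * g * z⁻¹) ^ (k - 1) = g ^ (k * (k - 1)) := by rw [← hk, ← zpow_mul]
      have h3 : g ^ (k * (k - 1)) = g ^ (k - 1) := by
        rw [zpow_eq_zpow_iff_modEq, hg]
        rw [Int.modEq_iff_dvd]
        obtain ⟨t, ht⟩ := hdvd1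
        refine ⟨-(t * t), ?_⟩
        have h0 : (k - 1) - k * (k - 1) = -((k - 1) * (k - 1)) := by ring
        rw [h0, ht]
        push_cast
        ring
      have h4 : z * c * z⁻¹ = c := by rw [h1, h2, h3, hc]
      exact (mul_inv_eq_iff_eq_mul.mp h4).symm
    have hcp : c ^ p = 1 := by
      rw [hc, ← zpow_natCast, ← zpow_mul]
      rw [← zpow_zero g, zpow_eq_zpow_iff_modEq, hg]
      rw [Int.modEq_iff_dvd]
      obtain ⟨t, ht⟩ := hdvd1
      refine ⟨-t, ?_⟩
      rw [zero_sub, ht]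
      push_cast
      ring
    have hctri : c ^ triN p = 1 := by
      obtain ⟨t, ht⟩ := p_dvd_triN p hp hpne
      rw [ht, pow_mul, hcp, one_pow]
    have hkey := mul_pow_triN g z c hcg hcz hczg p
    rw [hctri, hzp, mul_one, mul_one] at hkey
    have h5 : (g * z) ^ p ≠ 1 := by rw [hkey]; exact hgpne
    have h6 : orderOf (g * z) = p ^ 2 := hordp2 _ h5
    have h7 : g * z ∈ Subgroup.zpowers g := hmemA _ h6
    have h8 : z ∈ Subgroup.zpowers g := by
      have h9 := (Subgroup.zpowers g).mul_mem
        ((Subgroup.zpowers g).inv_mem (Subgroup.mem_zpowers g)) h7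
      rwa [← mul_assoc, inv_mul_cancel, one_mul] at h9
    exact hz h8
  constructor
  · -- p = 2
    intro hp2
    subst hp2
    by_cases hall : ∀ z : G, z ∈ Subgroup.zpowers g
    · left
      have := hcyc_case hall
      norm_num at this
      exact this
    · right
      push_neg at hall
      obtain ⟨x, hx⟩ := hall
      have hg4 : orderOf g = 4 := by rw [hg]; norm_num
      have hx2 : x * x = 1 := by
        have := houtside x hx
        rwa [pow_two] at this
      have hxinv : x⁻¹ = x := inv_eq_of_mul_eq_one_right hx2
      have hinvert : ∀ z : G, z ∉ Subgroup.zpowers g → z * g * z⁻¹ = g⁻¹ := by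
        intro z hz
        have hz2 : z * z = 1 := by have := houtside z hz; rwa [pow_two] at this
        have hzinv : z⁻¹ = z := inv_eq_of_mul_eq_one_right hz2
        have hzg : z * g ∉ Subgroup.zpowers g := by
          intro hmem
          apply hz
          have := (Subgroup.zpowers g).mul_mem hmem
            ((Subgroup.zpowers g).inv_mem (Subgroup.mem_zpowers g))
          rwa [mul_assoc, mul_inv_cancel, mul_one] at this
        have hzg2 : (z * g) * (z * g) = 1 := by
          have := houtside _ hzg; rwa [pow_two] at this
        rw [hzinv]
        have h0 : (z * g * z) * g = 1 := by rw [mul_assoc]; exact hzg2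
        exact eq_inv_of_mul_eq_one_left h0
      have hprod : ∀ u v : G, u ∉ Subgroup.zpowers g → v ∉ Subgroup.zpowers g →
          u * v ∈ Subgroup.zpowers g := by
        intro u v hu hv
        by_contra huv
        have h1 : (u * v) * g * (u * v)⁻¹ = g⁻¹ := hinvert _ huv
        have h2 : (u * v) * g * (u * v)⁻¹ = u * (v * g * v⁻¹) * u⁻¹ := by group
        rw [hinvert v hv] at h2
        have h3 : u * g⁻¹ * u⁻¹ = (u * g * u⁻¹)⁻¹ := by
          simp [mul_inv_rev, mul_assoc]
        rw [h3, hinvert u hu, inv_inv] at h2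
        -- h1, h2 : (u*v)*g*(u*v)⁻¹ = g⁻¹ and = g
        have h4 : g = g⁻¹ := h2.symm.trans h1
        have h5 : g ^ 2 = 1 := by
          rw [pow_two]
          nth_rewrite 2 [h4]
          exact mul_inv_cancel g
        rw [← orderOf_dvd_iff_pow_eq_one, hg4] at h5
        omega
      have hindex : (Subgroup.zpowers g).index = 2 := by
        rw [Subgroup.index_eq_two_iff]
        refine ⟨x, fun b => ?_⟩
        by_cases hb : b ∈ Subgroup.zpowers g
        · refine Or.inr ⟨hb, fun hbx => hx ?_⟩
          have := (Subgroup.zpowers g).mul_mem ((Subgroup.zpowers g).inv_mem hb) hbx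
          rwa [← mul_assoc, inv_mul_cancel, one_mul] at this
        · exact Or.inl ⟨hprod b x hb hx, hb⟩
      have hcard8 : Nat.card G = 8 := by
        have h1 := Subgroup.card_mul_index (Subgroup.zpowers g)
        rw [Nat.card_zpowers, hg4, hindex] at h1
        omega
      -- key power identities
      have hpow : ∀ i j : ZMod 4, g ^ (i + j).val = g ^ i.val * g ^ j.val := by
        intro i j
        rw [← pow_add, ZMod.val_add]
        apply pow_eq_pow_iff_modEq.mpr
        rw [hg4]
        exact Nat.mod_modEq _ 4
      have hsub : ∀ i j : ZMod 4, g ^ (j - i).val = (g ^ i.val)⁻¹ * g ^ j.val := by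
        intro i j
        rw [eq_inv_mul_iff_mul_eq, ← hpow]
        congr 1
        ring_nf
      have hgx : ∀ n : ℕ, g ^ n * x = x * (g ^ n)⁻¹ := by
        intro n
        have h2 : x * g ^ n * x⁻¹ = (g ^ n)⁻¹ := by
          rw [← conj_pow, hinvert x hx, inv_pow]
        rw [hxinv] at h2
        calc g ^ n * x = (x * x) * (g ^ n * x) := by rw [hx2, one_mul]
        _ = x * (x * g ^ n * x) := by simp [mul_assoc]
        _ = x * (g ^ n)⁻¹ := by rw [h2]
      have hzp : ∀ k : ℤ, (g ^ ((k : ZMod 4)).val : G) = g ^ k := by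
        intro k
        rw [← zpow_natCast]
        apply zpow_eq_zpow_iff_modEq.mpr
        rw [hg4]
        apply (ZMod.intCast_eq_intCast_iff _ _ _).mp
        push_cast
        simp [ZMod.natCast_val, ZMod.cast_id]
      let φ : DihedralGroup 4 → G := fun d => match d with
        | DihedralGroup.r i => g ^ i.val
        | DihedralGroup.sr i => x * g ^ i.val
      have hφmul : ∀ a b, φ (a * b) = φ a * φ b := by
        rintro (i | i) (j | j)
        · exact hpow i j
        · show x * g ^ (j - i).val = g ^ i.val * (x * g ^ j.val)
          rw [hsub, ← mul_assoc (g ^ i.val) x (g ^ j.val), hgx i.val]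
          simp [mul_assoc]
        · show x * g ^ (i + j).val = (x * g ^ i.val) * g ^ j.val
          rw [hpow, mul_assoc]
        · show g ^ (j - i).val = (x * g ^ i.val) * (x * g ^ j.val)
          rw [hsub]
          symm
          calc (x * g ^ i.val) * (x * g ^ j.val)
              = x * (g ^ i.val * x) * g ^ j.val := by simp [mul_assoc]
          _ = x * (x * (g ^ i.val)⁻¹) * g ^ j.val := by rw [hgx i.val]
          _ = (x * x) * ((g ^ i.val)⁻¹ * g ^ j.val) := by simp [mul_assoc]
          _ = (g ^ i.val)⁻¹ * g ^ j.val := by rw [hx2, one_mul]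
      have hφsurj : Function.Surjective φ := by
        intro y
        by_cases hy : y ∈ Subgroup.zpowers g
        · obtain ⟨k, hk⟩ := Subgroup.mem_zpowers_iff.mp hy
          refine ⟨DihedralGroup.r (k : ZMod 4), ?_⟩
          show (g ^ ((k : ZMod 4)).val : G) = y
          rw [hzp k]
          exact hk
        · have hxy : x * y ∈ Subgroup.zpowers g := hprod x y hx hy
          obtain ⟨k, hk⟩ := Subgroup.mem_zpowers_iff.mp hxy
          refine ⟨DihedralGroup.sr (k : ZMod 4), ?_⟩
          show x * g ^ ((k : ZMod 4)).val = y
          rw [hzp k, hk, ← mul_assoc, hx2, one_mul]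
      have hφbij : Function.Bijective φ := by
        rw [Fintype.bijective_iff_surjective_and_card]
        refine ⟨hφsurj, ?_⟩
        rw [DihedralGroup.card, ← Nat.card_eq_fintype_card, hcard8]
      exact ⟨(MulEquiv.ofBijective (MonoidHom.mk' φ hφmul) hφbij).symm⟩
  · intro hgt
    exact hcyc_case (hodd_top (by omega))
end

section
/- Let G be a finite group such that every element of G has order belonging to {1, 2, 3, 4}, and suppose G has a unique cyclic subgroup of order 3. Then G is isomorphic to the cyclic group Z_3 or to the symmetric group S_3. -/
noncomputable def permCongrMulEquiv' {α β : Type*} (e : α ≃ β) :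
    Equiv.Perm α ≃* Equiv.Perm β :=
  { Equiv.permCongr e with
    map_mul' := fun p q => by ext b; simp [Equiv.permCongr_def] }

/-- If every element of a finite group `G` has order in `{1,2,3,4}` and `G`
has a unique cyclic subgroup of order `3`, then `G ≅ Z₃` or `G ≅ S₃`. -/
theorem statement_4 {G : Type*} [Group G] [Fintype G]
    (horder : ∀ x : G, orderOf x ∈ ({1, 2, 3, 4} : Set ℕ))
    (huniq : ∃! K : Subgroup G, IsCyclic ↥K ∧ Nat.card ↥K = 3) :
    Nonempty (G ≃* Multiplicative (ZMod 3)) ∨ Nonempty (G ≃* Equiv.Perm (Fin 3)) := by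
  classical
  obtain ⟨K, ⟨hKcyc, hK3⟩, hKuniq⟩ := huniq
  have zpcyc : ∀ x : G, IsCyclic (Subgroup.zpowers x) := by
    intro x
    refine ⟨⟨x, Subgroup.mem_zpowers x⟩, ?_⟩
    rintro ⟨y, k, hk⟩
    exact ⟨k, by ext; simp [← hk]⟩
  have key : ∀ x : G, orderOf x = 3 → Subgroup.zpowers x = K := by
    intro x hx
    exact hKuniq _ ⟨zpcyc x, by rw [Nat.card_zpowers, hx]⟩
  obtain ⟨⟨g, hgK⟩, hgen⟩ := hKcyc.exists_generator
  have hg3 : orderOf g = 3 := by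
    have h1 : orderOf (⟨g, hgK⟩ : K) = Nat.card K :=
      orderOf_eq_card_of_forall_mem_zpowers hgen
    have h2 : orderOf (K.subtype ⟨g, hgK⟩) = orderOf (⟨g, hgK⟩ : K) :=
      orderOf_injective K.subtype K.subtype_injective ⟨g, hgK⟩
    have h2' : orderOf g = orderOf (⟨g, hgK⟩ : K) := h2
    rw [h2', h1, hK3]
  have hgzp : Subgroup.zpowers g = K := key g hg3
  have hgne : g ≠ g⁻¹ := by
    intro he
    have h2 : g ^ 2 = 1 := by
      rw [pow_two]; nth_rewrite 2 [he]; rw [mul_inv_cancel]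
    have := orderOf_dvd_of_pow_eq_one h2
    rw [hg3] at this; omega
  have hKelts : ∀ y : G, y ∈ K → y = 1 ∨ y = g ∨ y = g⁻¹ := by
    intro y hy
    rw [← hgzp, Subgroup.mem_zpowers_iff] at hy
    obtain ⟨k, hk⟩ := hy
    have hmod : g ^ (k % 3) = y := by
      rw [← hk]
      conv_rhs => rw [← zpow_mod_orderOf]
      rw [hg3]
      norm_num
    have h0 : 0 ≤ k % 3 := Int.emod_nonneg k (by norm_num)
    have h1 : k % 3 < 3 := Int.emod_lt_of_pos k (by norm_num)
    interval_cases h : (k % 3)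
    · left; simpa using hmod.symm
    · right; left; simpa using hmod.symm
    · right; right
      rw [← hmod]
      have h3 : g ^ (3:ℕ) = 1 := by rw [← hg3]; exact pow_orderOf_eq_one g
      have h2 : g ^ (2:ℕ) = g⁻¹ := by
        rw [show (3:ℕ) = 2 + 1 by norm_num, pow_succ] at h3
        exact eq_inv_of_mul_eq_one_left h3
      rw [show (2:ℤ) = ((2:ℕ) : ℤ) by norm_num, zpow_natCast, h2]
  have hconjord : ∀ x y : G, orderOf (x * y * x⁻¹) = orderOf y := fun x y =>
    (SemiconjBy.orderOf_eq x
      (by simp [SemiconjBy, mul_assoc] : SemiconjBy x y (x*y*x⁻¹))).symm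
  have hconj : ∀ x : G, x * g * x⁻¹ = g ∨ x * g * x⁻¹ = g⁻¹ := by
    intro x
    have ho : orderOf (x * g * x⁻¹) = 3 := by rw [hconjord, hg3]
    have hm : x * g * x⁻¹ ∈ K := by
      rw [← key _ ho]; exact Subgroup.mem_zpowers _
    rcases hKelts _ hm with h | h | h
    · exfalso; rw [h, orderOf_one] at ho; omega
    · exact Or.inl h
    · exact Or.inr h
  have hcent : Subgroup.centralizer {g} = K := by
    apply le_antisymm
    · intro x hx
      rw [Subgroup.mem_centralizer_iff] at hx
      have hcomm : Commute x g := (hx g (by simp)).symm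
      rcases horder x with h1 | h2 | h3 | h4
      · have hx1 : x = 1 := orderOf_eq_one_iff.mp h1
        rw [hx1]; exact K.one_mem
      · exfalso
        have h6 : orderOf (x * g) = 2 * 3 := by
          rw [← h2, ← hg3]
          exact Commute.orderOf_mul_eq_mul_orderOf_of_coprime hcomm
            (by rw [h2, hg3]; norm_num)
        have := horder (x * g)
        rw [h6] at this
        simp at this
      · rw [← key x h3]; exact Subgroup.mem_zpowers x
      · exfalso
        set y := x ^ 2 with hy
        have hy2 : orderOf y = 2 := by
          rw [hy, orderOf_pow, h4]; norm_num
        have hcomm2 : Commute y g := hcomm.pow_left 2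
        have h6 : orderOf (y * g) = 2 * 3 := by
          rw [← hy2, ← hg3]
          exact Commute.orderOf_mul_eq_mul_orderOf_of_coprime hcomm2
            (by rw [hy2, hg3]; norm_num)
        have := horder (y * g)
        rw [h6] at this
        simp at this
    · intro x hx
      rw [← hgzp, Subgroup.mem_zpowers_iff] at hx
      obtain ⟨k, hk⟩ := hx
      rw [Subgroup.mem_centralizer_iff]
      intro h hh
      have hhg : h = g := hh
      rw [hhg, ← hk]
      exact (Commute.zpow_right (Commute.refl g) k)
  -- homomorphism to ZMod 2 recording whether x fixes or inverts g
  have hinv : ∀ a : G, a * g⁻¹ * a⁻¹ = (a * g * a⁻¹)⁻¹ := fun a => by group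
  let f : G →* Multiplicative (ZMod 2) :=
    { toFun := fun x => if x * g * x⁻¹ = g then 1 else Multiplicative.ofAdd 1
      map_one' := by simp
      map_mul' := by
        intro x y
        have hxy : (x * y) * g * (x * y)⁻¹ = x * (y * g * y⁻¹) * x⁻¹ := by group
        rcases hconj x with hx | hx <;> rcases hconj y with hy | hy
        · rw [if_pos (by rw [hxy, hy, hx]), if_pos hx, if_pos hy, one_mul]
        · have hyc : ¬ (y * g * y⁻¹ = g) := by
            rw [hy]; intro h; exact hgne h.symm
          have hxyc : ¬ ((x * y) * g * (x * y)⁻¹ = g) := by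
            rw [hxy, hy, hinv, hx]; intro h; exact hgne h.symm
          rw [if_neg hxyc, if_pos hx, if_neg hyc, one_mul]
        · have hxc : ¬ (x * g * x⁻¹ = g) := by
            rw [hx]; intro h; exact hgne h.symm
          have hxyc : ¬ ((x * y) * g * (x * y)⁻¹ = g) := by
            rw [hxy, hy, hx]; intro h; exact hgne h.symm
          rw [if_neg hxyc, if_neg hxc, if_pos hy, mul_one]
        · have hxc : ¬ (x * g * x⁻¹ = g) := by
            rw [hx]; intro h; exact hgne h.symm
          have hyc : ¬ (y * g * y⁻¹ = g) := by
            rw [hy]; intro h; exact hgne h.symm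
          rw [if_pos (by rw [hxy, hy, hinv, hx, inv_inv]), if_neg hxc, if_neg hyc]
          decide }
  have hker : f.ker = K := by
    rw [← hcent]
    ext x
    rw [MonoidHom.mem_ker]
    show (if x * g * x⁻¹ = g then (1 : Multiplicative (ZMod 2))
        else Multiplicative.ofAdd 1) = 1 ↔ _
    constructor
    · intro hx
      by_cases hc : x * g * x⁻¹ = g
      · rw [Subgroup.mem_centralizer_iff]
        intro h hh
        have hhg : h = g := hh
        rw [mul_inv_eq_iff_eq_mul] at hc
        rw [hhg, ← hc]
      · rw [if_neg hc] at hx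
        exact absurd hx (by decide)
    · intro hx
      rw [Subgroup.mem_centralizer_iff] at hx
      have := (hx g (by simp)).symm
      rw [if_pos (by rw [mul_inv_eq_iff_eq_mul]; exact this)]
  have hcard : Nat.card G = Nat.card (G ⧸ f.ker) * 3 := by
    rw [Subgroup.card_eq_card_quotient_mul_card_subgroup f.ker, hker, hK3]
  have hqdvd : Nat.card (G ⧸ f.ker) ∣ 2 := by
    rw [Nat.card_congr (QuotientGroup.quotientKerEquivRange f).toEquiv]
    have h1 := Subgroup.card_subgroup_dvd_card f.range
    have h2 : Nat.card (Multiplicative (ZMod 2)) = 2 := by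
      simp [Nat.card_eq_fintype_card]
    rwa [h2] at h1
  rcases (Nat.prime_two.eq_one_or_self_of_dvd _ hqdvd) with hq | hq
  · -- |G| = 3 : cyclic
    have hc3 : Nat.card G = 3 := by rw [hcard, hq, one_mul]
    left
    haveI : Fact (Nat.Prime 3) := ⟨by norm_num⟩
    have e2 : Multiplicative (ZMod (Nat.card G)) ≃* G :=
      zmodCyclicMulEquiv (isCyclic_of_prime_card hc3)
    rw [hc3] at e2
    exact ⟨e2.symm⟩
  · -- |G| = 6 : S₃
    have hc6 : Nat.card G = 6 := by rw [hcard, hq]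
    right
    -- an element of order 2 outside K
    have hKneT : K ≠ ⊤ := by
      intro h
      rw [h, Subgroup.card_top, hc6] at hK3
      omega
    obtain ⟨x, hxK⟩ : ∃ x : G, x ∉ K := by
      by_contra h
      push_neg at h
      exact hKneT ((Subgroup.eq_top_iff' K).mpr h)
    have hx2 : orderOf x = 2 := by
      rcases horder x with h | h | h | h
      · exact absurd (orderOf_eq_one_iff.mp h ▸ K.one_mem) hxK
      · exact h
      · exact absurd (by rw [← key x h]; exact Subgroup.mem_zpowers x) hxK
      · exfalso
        have := orderOf_dvd_natCard x
        rw [h, hc6] at this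
        omega
    set H := Subgroup.zpowers x with hH
    have hH2 : Nat.card H = 2 := by rw [hH, Nat.card_zpowers, hx2]
    have hHelts : ∀ y : G, y ∈ H → y = 1 ∨ y = x := by
      intro y hy
      rw [hH, Subgroup.mem_zpowers_iff] at hy
      obtain ⟨k, hk⟩ := hy
      have hmod : x ^ (k % 2) = y := by
        rw [← hk]
        conv_rhs => rw [← zpow_mod_orderOf]
        rw [hx2]
        norm_num
      have h0 : 0 ≤ k % 2 := Int.emod_nonneg k (by norm_num)
      have h1 : k % 2 < 2 := Int.emod_lt_of_pos k (by norm_num)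
      interval_cases h : (k % 2)
      · left; simpa using hmod.symm
      · right; simpa using hmod.symm
    have hcore : H.normalCore = ⊥ := by
      have hle := H.normalCore_le
      have hdvd : Nat.card H.normalCore ∣ 2 := hH2 ▸ Subgroup.card_dvd_of_le hle
      rcases Nat.prime_two.eq_one_or_self_of_dvd _ hdvd with h1 | h2
      · exact (Subgroup.card_le_one_iff_eq_bot _).mp (le_of_eq h1)
      · exfalso
        have heq : H.normalCore = H :=
          Subgroup.eq_of_le_of_card_ge hle (by rw [hH2, h2])
        haveI hnorm : H.Normal := heq ▸ H.normalCore_normal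
        have hmem : g * x * g⁻¹ ∈ H := hnorm.conj_mem x (Subgroup.mem_zpowers x) g
        have hord : orderOf (g * x * g⁻¹) = 2 := by rw [hconjord, hx2]
        rcases hHelts _ hmem with h | h
        · rw [h, orderOf_one] at hord; omega
        · have hcomm : g * x = x * g := by
            rwa [mul_inv_eq_iff_eq_mul] at h
          have hxc : x ∈ Subgroup.centralizer {g} := by
            rw [Subgroup.mem_centralizer_iff]
            intro h' hh'
            have hhg : h' = g := hh'
            rw [hhg]
            exact hcomm
          rw [hcent] at hxc
          exact hxK hxc
    -- faithful action on the three cosets of H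
    let φ := MulAction.toPermHom G (G ⧸ H)
    have hφinj : Function.Injective φ := by
      rw [← MonoidHom.ker_eq_bot_iff]
      rw [← Subgroup.normalCore_eq_ker]
      exact hcore
    have hq3 : Nat.card (G ⧸ H) = 3 := by
      have := Subgroup.card_eq_card_quotient_mul_card_subgroup H
      rw [hc6, hH2] at this
      omega
    haveI : Fintype (G ⧸ H) := Fintype.ofFinite _
    have e : (G ⧸ H) ≃ Fin 3 :=
      Fintype.equivFinOfCardEq (by rw [← Nat.card_eq_fintype_card]; exact hq3)
    let ψ : G →* Equiv.Perm (Fin 3) := (permCongrMulEquiv' e).toMonoidHom.comp φ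
    have hψinj : Function.Injective ψ :=
      (permCongrMulEquiv' e).injective.comp hφinj
    have hbij : Function.Bijective ψ := by
      rw [Nat.bijective_iff_injective_and_card]
      refine ⟨hψinj, ?_⟩
      rw [hc6, Nat.card_eq_fintype_card, Fintype.card_perm]
      decide
    exact ⟨MulEquiv.ofBijective ψ hbij⟩
end

section
/- Let G be a finite group, H a proper normal subgroup of G, and let aH and bH be two distinct cosets of H, both different from H, such that aH and bH are adjacent in the power graph P(G/H). Then the set aH ∪ bH ∪ {e} is a clique in the normal subgroup based power graph Γ_H(G); that is, the subgraph of Γ_H(G) induced by aH ∪ bH ∪ {e} is a complete graph on 2|H| + 1 vertices. -/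
open scoped Pointwise

/-- If `aH` and `bH` are distinct cosets `≠ H` adjacent in the power graph
of `G/H`, then `aH ∪ bH ∪ {e}` is a clique of `2|H| + 1` vertices in `Γ_H(G)`. -/
theorem statement_8 {G : Type*} [Group G] [Fintype G] (H : Subgroup G) [H.Normal]
    (hproper : H ≠ ⊤) (a b : G) (ha : a ∉ H) (hb : b ∉ H)
    (hcosets : (QuotientGroup.mk a : G ⧸ H) ≠ QuotientGroup.mk b)
    (hadj : (powerGraph (G ⧸ H)).Adj (QuotientGroup.mk a) (QuotientGroup.mk b)) :
    (nsbPowerGraph G H).IsClique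
      {v : nsbVertexSet H |
        (v : G) ∈ a • (H : Set G) ∨ (v : G) ∈ b • (H : Set G) ∨ (v : G) = 1} ∧
    ({v : nsbVertexSet H |
        (v : G) ∈ a • (H : Set G) ∨ (v : G) ∈ b • (H : Set G) ∨ (v : G) = 1}).ncard
      = 2 * Nat.card H + 1 := by
  classical
  have mem_iff : ∀ g x : G, x ∈ g • (H : Set G) ↔
      (QuotientGroup.mk g : G ⧸ H) = QuotientGroup.mk x := by
    intro g x
    rw [mem_leftCoset_iff, QuotientGroup.eq]
    rfl
  have hmk_pow : ∀ (x : G) (m : ℕ),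
      (QuotientGroup.mk (x ^ m) : G ⧸ H) = (QuotientGroup.mk x : G ⧸ H) ^ m := by
    intro x m
    exact (QuotientGroup.mk' H).map_pow x m
  have hone : ∀ x : G, ∃ m : ℕ, 0 < m ∧
      (QuotientGroup.mk (1 : G) : G ⧸ H) = QuotientGroup.mk (x ^ m) := by
    intro x
    refine ⟨Fintype.card G, Fintype.card_pos, ?_⟩
    rw [pow_card_eq_one]
  constructor
  · intro x hx y hy hxy
    have hne : (x : G) ≠ (y : G) := fun h => hxy (Subtype.ext h)
    refine ⟨hne, ?_⟩
    simp only [Set.mem_setOf_eq] at hx hy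
    obtain ⟨-, hcross⟩ := hadj
    rcases hx with hx | hx | hx <;> rcases hy with hy | hy | hy
    · -- both in aH
      exact Or.inl ⟨1, one_pos, by
        rw [pow_one, ← (mem_iff a x).mp hx, ← (mem_iff a y).mp hy]⟩
    · -- x ∈ aH, y ∈ bH
      have hx' := (mem_iff a (x : G)).mp hx
      have hy' := (mem_iff b (y : G)).mp hy
      rcases hcross with ⟨m, hm, h⟩ | ⟨n, hn, h⟩
      · exact Or.inl ⟨m, hm, by rw [hmk_pow, ← hx', ← hy']; exact h⟩
      · exact Or.inr ⟨n, hn, by rw [hmk_pow, ← hx', ← hy']; exact h⟩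
    · -- x ∈ aH, y = 1
      refine Or.inr ?_
      obtain ⟨m, hm, h⟩ := hone (x : G)
      exact ⟨m, hm, by rw [hy]; exact h⟩
    · -- x ∈ bH, y ∈ aH
      have hx' := (mem_iff b (x : G)).mp hx
      have hy' := (mem_iff a (y : G)).mp hy
      rcases hcross with ⟨m, hm, h⟩ | ⟨n, hn, h⟩
      · exact Or.inr ⟨m, hm, by rw [hmk_pow, ← hx', ← hy']; exact h⟩
      · exact Or.inl ⟨n, hn, by rw [hmk_pow, ← hx', ← hy']; exact h⟩
    · -- both in bH
      exact Or.inl ⟨1, one_pos, by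
        rw [pow_one, ← (mem_iff b x).mp hx, ← (mem_iff b y).mp hy]⟩
    · -- x ∈ bH, y = 1
      refine Or.inr ?_
      obtain ⟨m, hm, h⟩ := hone (x : G)
      exact ⟨m, hm, by rw [hy]; exact h⟩
    · -- x = 1, y ∈ aH
      refine Or.inl ?_
      obtain ⟨m, hm, h⟩ := hone (y : G)
      exact ⟨m, hm, by rw [hx]; exact h⟩
    · -- x = 1, y ∈ bH
      refine Or.inl ?_
      obtain ⟨m, hm, h⟩ := hone (y : G)
      exact ⟨m, hm, by rw [hx]; exact h⟩
    · exact absurd (hx.trans hy.symm) hne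
  · -- cardinality
    have hsubH : ∀ g : G, g ∉ H → ∀ x : G, x ∈ g • (H : Set G) → x ∉ H := by
      intro g hg x hx hxH
      have h1 : (QuotientGroup.mk g : G ⧸ H) = QuotientGroup.mk x := (mem_iff g x).mp hx
      have h2 : (QuotientGroup.mk x : G ⧸ H) = 1 := (QuotientGroup.eq_one_iff x).mpr hxH
      exact hg ((QuotientGroup.eq_one_iff g).mp (h1.trans h2))
    have himg : Subtype.val '' {v : nsbVertexSet H |
        (v : G) ∈ a • (H : Set G) ∨ (v : G) ∈ b • (H : Set G) ∨ (v : G) = 1}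
        = a • (H : Set G) ∪ (b • (H : Set G) ∪ {1}) := by
      ext x
      constructor
      · rintro ⟨⟨x, hxv⟩, hx, rfl⟩
        simp only [Set.mem_setOf_eq] at hx
        rcases hx with h | h | h
        · exact Or.inl h
        · exact Or.inr (Or.inl h)
        · exact Or.inr (Or.inr h)
      · rintro (h | h | h)
        · exact ⟨⟨x, Or.inl (hsubH a ha x h)⟩, Or.inl h, rfl⟩
        · exact ⟨⟨x, Or.inl (hsubH b hb x h)⟩, Or.inr (Or.inl h), rfl⟩
        · exact ⟨⟨x, Or.inr h⟩, Or.inr (Or.inr h), rfl⟩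
    have hcard : ∀ g : G, (g • (H : Set G)).ncard = Nat.card H := by
      intro g
      have : g • (H : Set G) = (fun x => g * x) '' (H : Set G) := rfl
      rw [this, Set.ncard_image_of_injective _ (mul_right_injective g),
        ← Nat.card_coe_set_eq]
      exact Nat.card_congr (Equiv.refl _)
    have hdisj1 : Disjoint (b • (H : Set G)) ({1} : Set G) := by
      rw [Set.disjoint_singleton_right]
      intro h1
      have : (QuotientGroup.mk b : G ⧸ H) = 1 := (mem_iff b 1).mp h1
      exact hb ((QuotientGroup.eq_one_iff b).mp this)
    have hdisj2 : Disjoint (a • (H : Set G)) (b • (H : Set G) ∪ {1}) := by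
      rw [Set.disjoint_union_right]
      constructor
      · rw [Set.disjoint_left]
        intro x hxa hxb
        exact hcosets (((mem_iff a x).mp hxa).trans ((mem_iff b x).mp hxb).symm)
      · rw [Set.disjoint_singleton_right]
        intro h1
        have : (QuotientGroup.mk a : G ⧸ H) = 1 := (mem_iff a 1).mp h1
        exact ha ((QuotientGroup.eq_one_iff a).mp this)
    rw [← Set.ncard_image_of_injective _ Subtype.val_injective, himg,
      Set.ncard_union_eq hdisj2 (Set.toFinite _) (Set.toFinite _),
      Set.ncard_union_eq hdisj1 (Set.toFinite _) (Set.toFinite _),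
      hcard, hcard, Set.ncard_singleton]
    ring
end

section
/- Let G be a finite group and H a normal subgroup of G with |H| = 2 such that the quotient group G/H is isomorphic to the cyclic group Z_3. Then the normal subgroup based power graph Γ_H(G) is isomorphic to the complete graph K_5. -/
/-- If `|H| = 2` and `G/H ≅ Z₃`, then `Γ_H(G) ≅ K₅`. -/
theorem statement_11 {G : Type*} [Group G] [Fintype G] (H : Subgroup G) [H.Normal]
    (hcard : Nat.card H = 2) (hq : Nonempty (G ⧸ H ≃* Multiplicative (ZMod 3))) :
    Nonempty (nsbPowerGraph G H ≃g kGraph 5) := by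

  classical
  obtain ⟨φ⟩ := hq
  have hz : ∀ u v : Multiplicative (ZMod 3),
      u = v ^ 1 ∨ u = v ^ 2 ∨ u = v ^ 3 ∨ v = u ^ 3 := by decide
  have hq3 : ∀ x y : G ⧸ H, x = y ^ 1 ∨ x = y ^ 2 ∨ x = y ^ 3 ∨ y = x ^ 3 := by
    intro x y
    rcases hz (φ x) (φ y) with h | h | h | h
    · exact Or.inl (φ.injective (by rw [h, map_pow]))
    · exact Or.inr (Or.inl (φ.injective (by rw [h, map_pow])))
    · exact Or.inr (Or.inr (Or.inl (φ.injective (by rw [h, map_pow]))))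
    · exact Or.inr (Or.inr (Or.inr (φ.injective (by rw [h, map_pow]))))
  have mkpow : ∀ (x : G) (m : ℕ),
      (QuotientGroup.mk (x ^ m) : G ⧸ H) = (QuotientGroup.mk x : G ⧸ H) ^ m := by
    intro x m
    exact map_pow (QuotientGroup.mk' H) x m
  have adj : ∀ a b : nsbVertexSet H, (a : G) ≠ (b : G) → (nsbPowerGraph G H).Adj a b := by
    intro a b hne
    refine ⟨hne, ?_⟩
    rcases hq3 (QuotientGroup.mk (a : G)) (QuotientGroup.mk (b : G)) with h | h | h | h
    · exact Or.inl ⟨1, one_pos, by rw [mkpow]; exact h⟩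
    · exact Or.inl ⟨2, by norm_num, by rw [mkpow]; exact h⟩
    · exact Or.inl ⟨3, by norm_num, by rw [mkpow]; exact h⟩
    · exact Or.inr ⟨3, by norm_num, by rw [mkpow]; exact h⟩
  -- cardinality
  have hQ : Nat.card (G ⧸ H) = 3 := by
    rw [Nat.card_congr φ.toEquiv]; simp [Nat.card_eq_fintype_card]
  have hG : Nat.card G = 6 := by
    rw [H.card_eq_card_quotient_mul_card_subgroup, hQ, hcard]
  have hset : nsbVertexSet H = insert (1 : G) ((H : Set G)ᶜ) := by
    ext x
    simp [nsbVertexSet, or_comm]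
  have hcardset : Nat.card (nsbVertexSet H) = 5 := by
    rw [Nat.card_coe_set_eq, hset,
      Set.ncard_insert_of_notMem (by simp [H.one_mem])]
    have h1 : (H : Set G).ncard + ((H : Set G)ᶜ).ncard = Nat.card G :=
      Set.ncard_add_ncard_compl _
    have h2 : (H : Set G).ncard = 2 := by
      rw [← Nat.card_coe_set_eq]; exact hcard
    omega
  have : Fintype (nsbVertexSet H) := Fintype.ofFinite _
  have e : nsbVertexSet H ≃ Fin 5 :=
    Fintype.equivFinOfCardEq (by rw [← Nat.card_eq_fintype_card]; exact hcardset)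
  refine ⟨⟨e, ?_⟩⟩
  intro a b
  have hk : (kGraph 5).Adj (e a) (e b) ↔ e a ≠ e b := SimpleGraph.top_adj _ _
  constructor
  · intro h
    have hne : e a ≠ e b := hk.mp h
    exact adj a b (fun hab => hne (congrArg e (Subtype.ext hab)))
  · intro h
    exact hk.mpr (e.injective.ne_iff.mpr (fun hab => h.1 (congrArg Subtype.val hab)))
end

section
/- Let G be a finite group and H a normal subgroup of G with |H| = 2 such that the quotient group G/H is isomorphic to the dihedral group D_8 of order 8. Then the normal subgroup based power graph Γ_H(G) is isomorphic to the graph K_1 ∨ (K_6 ∪ 4K_2). -/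
/-! ### Auxiliary constructions for Statement 13 -/

namespace Statement13Aux

/-- Explicit enumeration of `D₈` by `Fin 1 ⊕ (Fin 3 ⊕ Fin 4)`:
identity, the three nontrivial rotations, the four reflections. -/
def d8of : (Fin 1 ⊕ (Fin 3 ⊕ Fin 4)) → DihedralGroup 4
  | .inl _ => .r 0
  | .inr (.inl j) => .r (j.val + 1 : ℕ)
  | .inr (.inr k) => .sr (k.val : ℕ)

lemma d8of_bij : Function.Bijective d8of := by decide

/-- The enumeration as an equivalence. -/
noncomputable def eD : (Fin 1 ⊕ (Fin 3 ⊕ Fin 4)) ≃ DihedralGroup 4 :=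
  Equiv.ofBijective d8of d8of_bij

lemma eD_apply (t : Fin 1 ⊕ (Fin 3 ⊕ Fin 4)) : eD t = d8of t := rfl

/-- Decidable characterization of the power relation on `D₈`. -/
def R' (x y : DihedralGroup 4) : Prop :=
  (x = y ∨ x = y ^ 2 ∨ x = y ^ 3 ∨ x = 1) ∨ (y = x ∨ y = x ^ 2 ∨ y = x ^ 3 ∨ y = 1)

instance (x y : DihedralGroup 4) : Decidable (R' x y) := by
  unfold R'; infer_instance

lemma pow4 : ∀ y : DihedralGroup 4, y ^ 4 = 1 := by decide

lemma Rchar (x y : DihedralGroup 4) :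
    ((∃ m : ℕ, 0 < m ∧ x = y ^ m) ∨ (∃ n : ℕ, 0 < n ∧ y = x ^ n)) ↔ R' x y := by
  have key : ∀ a b : DihedralGroup 4, (∃ m : ℕ, 0 < m ∧ a = b ^ m) ↔
      (a = b ∨ a = b ^ 2 ∨ a = b ^ 3 ∨ a = 1) := by
    intro a b
    constructor
    · rintro ⟨m, hm, rfl⟩
      rw [pow_eq_pow_mod m (pow4 b)]
      have h4 : m % 4 = 0 ∨ m % 4 = 1 ∨ m % 4 = 2 ∨ m % 4 = 3 := by omega
      rcases h4 with h | h | h | h <;> rw [h] <;> simp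
    · rintro (rfl | rfl | rfl | rfl)
      · exact ⟨1, one_pos, (pow_one _).symm⟩
      · exact ⟨2, by norm_num, rfl⟩
      · exact ⟨3, by norm_num, rfl⟩
      · exact ⟨4, by norm_num, (pow4 b).symm⟩
  unfold R'
  rw [key, key]

lemma rot_adj : ∀ j j' : Fin 3, R' (d8of (.inr (.inl j))) (d8of (.inr (.inl j'))) := by decide

lemma refl_adj : ∀ k k' : Fin 4,
    R' (d8of (.inr (.inr k))) (d8of (.inr (.inr k'))) ↔ k = k' := by decide

lemma mixed1 : ∀ (j : Fin 3) (k : Fin 4),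
    ¬ R' (d8of (.inr (.inl j))) (d8of (.inr (.inr k))) := by decide

lemma mixed2 : ∀ (k : Fin 4) (j : Fin 3),
    ¬ R' (d8of (.inr (.inr k))) (d8of (.inr (.inl j))) := by decide

lemma one_R' (y : DihedralGroup 4) : R' 1 y := Or.inl (Or.inr (Or.inr (Or.inr rfl)))

lemma R'_one (x : DihedralGroup 4) : R' x 1 := Or.inr (Or.inr (Or.inr (Or.inr rfl)))

lemma d8of_inr_ne_one (s : Fin 3 ⊕ Fin 4) : d8of (.inr s) ≠ 1 := by
  intro h
  have : d8of (.inr s) = d8of (.inl 0) := by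
    rw [h]; rfl
  cases d8of_bij.injective this

section Group

variable {G : Type*} [Group G] (H : Subgroup G) [H.Normal]
  (iso : G ⧸ H ≃* DihedralGroup 4) (e2 : H ≃ Fin 2)

/-- The composite homomorphism `G → G/H → D₈`. -/
def phi : G →* DihedralGroup 4 := iso.toMonoidHom.comp (QuotientGroup.mk' H)

lemma phi_def (x : G) : phi H iso x = iso (QuotientGroup.mk x) := rfl

lemma phi_eq_iff (a b : G) :
    (QuotientGroup.mk a : G ⧸ H) = QuotientGroup.mk b ↔ phi H iso a = phi H iso b := by
  rw [phi_def, phi_def]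
  exact ⟨fun h => by rw [h], fun h => iso.injective h⟩

lemma phi_eq_one_iff (x : G) : phi H iso x = 1 ↔ x ∈ H := by
  rw [phi_def, MulEquiv.map_eq_one_iff, QuotientGroup.eq_one_iff]

/-- The index of an element within its coset. -/
noncomputable def idx (v : G) : Fin 2 :=
  e2 ⟨((QuotientGroup.mk v : G ⧸ H)).out⁻¹ * v,
    QuotientGroup.eq.mp (QuotientGroup.out_eq' (QuotientGroup.mk v : G ⧸ H))⟩

/-- Reconstruct an element from its `D₈`-image and its coset index. -/
noncomputable def W (d : DihedralGroup 4) (j : Fin 2) : G :=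
  ((iso.symm d : G ⧸ H)).out * ((e2.symm j : H) : G)

lemma mk_W (d : DihedralGroup 4) (j : Fin 2) :
    (QuotientGroup.mk (W H iso e2 d j) : G ⧸ H) = iso.symm d := by
  unfold W
  rw [QuotientGroup.mk_mul]
  have h1 : (QuotientGroup.mk ((e2.symm j : H) : G) : G ⧸ H) = 1 :=
    (QuotientGroup.eq_one_iff _).mpr (e2.symm j).2
  rw [h1, mul_one, QuotientGroup.out_eq']

lemma phi_W (d : DihedralGroup 4) (j : Fin 2) : phi H iso (W H iso e2 d j) = d := by
  rw [phi_def, mk_W, MulEquiv.apply_symm_apply]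

lemma idx_W (d : DihedralGroup 4) (j : Fin 2) : idx H e2 (W H iso e2 d j) = j := by
  unfold idx
  rw [Equiv.apply_eq_iff_eq_symm_apply]
  apply Subtype.ext
  show ((QuotientGroup.mk (W H iso e2 d j) : G ⧸ H)).out⁻¹ * W H iso e2 d j
      = ((e2.symm j : H) : G)
  rw [mk_W]
  unfold W
  rw [inv_mul_cancel_left]

lemma W_phi_idx (v : G) : W H iso e2 (phi H iso v) (idx H e2 v) = v := by
  unfold W idx
  rw [phi_def, MulEquiv.symm_apply_apply, Equiv.symm_apply_apply]
  exact mul_inv_cancel_left _ _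

lemma phi_idx_inj {u v : G} (h1 : phi H iso u = phi H iso v) (h2 : idx H e2 u = idx H e2 v) :
    u = v := by
  rw [← W_phi_idx H iso e2 u, ← W_phi_idx H iso e2 v, h1, h2]

end Group

/-- The equivalence `Fin 3 × Fin 2 ≃ Fin 6`. -/
def e6 : Fin 3 × Fin 2 ≃ Fin 6 := finProdFinEquiv.trans (finCongr (by norm_num))

/-- Labeling function on `D₈`-classes. -/
def lab : (Fin 1 ⊕ (Fin 3 ⊕ Fin 4)) → Fin 2 → (Fin 1 ⊕ (Fin 6 ⊕ Fin 4 × Fin 2))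
  | .inl _, _ => .inl 0
  | .inr (.inl j), i => .inr (.inl (e6 (j, i)))
  | .inr (.inr k), i => .inr (.inr (k, i))

end Statement13Aux

open Statement13Aux in
/-- If `|H| = 2` and `G/H ≅ D₈`, then `Γ_H(G) ≅ K₁ ∨ (K₆ ∪ 4K₂)`. -/
theorem statement_13 {G : Type*} [Group G] [Fintype G] (H : Subgroup G) [H.Normal]
    (hcard : Nat.card H = 2) (hq : Nonempty (G ⧸ H ≃* DihedralGroup 4)) :
    Nonempty (nsbPowerGraph G H ≃g
      graphJoin (kGraph 1) (SimpleGraph.sum (kGraph 6) (unionKGraph 4 2))) := by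
  classical
  obtain ⟨iso⟩ := hq
  have : Fintype H := Fintype.ofFinite H
  have e2 : (H : Type _) ≃ Fin 2 :=
    Fintype.equivFinOfCardEq (by rw [← Nat.card_eq_fintype_card, hcard])
  -- the forward map on `G`
  set φ := phi H iso with hφ
  let fwd : G → Fin 1 ⊕ (Fin 6 ⊕ Fin 4 × Fin 2) := fun v =>
    if v = 1 then .inl 0 else lab (eD.symm (φ v)) (idx H e2 v)
  let bwd : (Fin 1 ⊕ (Fin 6 ⊕ Fin 4 × Fin 2)) → G := fun t =>
    match t with
    | .inl _ => 1
    | .inr (.inl j) => W H iso e2 (d8of (.inr (.inl (e6.symm j).1))) (e6.symm j).2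
    | .inr (.inr (k, i)) => W H iso e2 (d8of (.inr (.inr k))) i
  -- membership facts
  have hmem : ∀ x : G, x ∈ nsbVertexSet H ↔ (x ∉ H ∨ x = 1) := by
    intro x
    simp only [nsbVertexSet, Set.mem_union, Set.mem_setOf_eq, Set.mem_singleton_iff]
  have hone_mem : (1 : G) ∈ nsbVertexSet H := (hmem 1).mpr (Or.inr rfl)
  have hphi_ne : ∀ x : G, x ∈ nsbVertexSet H → x ≠ 1 → φ x ≠ 1 := by
    intro x hx hx1
    rcases (hmem x).mp hx with h | h
    · rw [hφ, Ne, phi_eq_one_iff]; exact h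
    · exact absurd h hx1
  have hbwd_mem : ∀ t, bwd t ∈ nsbVertexSet H := by
    intro t
    rcases t with _ | (j | ⟨k, i⟩)
    · exact hone_mem
    · refine (hmem _).mpr (Or.inl ?_)
      rw [← phi_eq_one_iff H iso, ← hφ, phi_W]
      exact d8of_inr_ne_one _
    · refine (hmem _).mpr (Or.inl ?_)
      rw [← phi_eq_one_iff H iso, ← hφ, phi_W]
      exact d8of_inr_ne_one _
  have hbwd_ne_one : ∀ s : Fin 3 ⊕ Fin 4, ∀ i : Fin 2,
      W H iso e2 (d8of (.inr s)) i ≠ 1 := by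
    intro s i h
    apply d8of_inr_ne_one s
    rw [← phi_W H iso e2 (d8of (.inr s)) i, h, map_one]
  -- computation of fwd on bwd values
  have hfwd_W : ∀ s : Fin 3 ⊕ Fin 4, ∀ i : Fin 2,
      fwd (W H iso e2 (d8of (.inr s)) i) = lab (.inr s) i := by
    intro s i
    show (if _ = 1 then _ else _) = _
    rw [if_neg (hbwd_ne_one s i)]
    have h1 : φ (W H iso e2 (d8of (.inr s)) i) = eD (.inr s) := phi_W H iso e2 _ _
    rw [h1, Equiv.symm_apply_apply, idx_W]
  -- not-inl fact
  have hnotinl : ∀ x : G, φ x ≠ 1 → ∀ j : Fin 1, eD.symm (φ x) ≠ .inl j := by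
    intro x hx j h
    apply hx
    have := congrArg eD h
    rw [Equiv.apply_symm_apply] at this
    rw [this]
    show d8of (.inl j) = 1
    rw [DihedralGroup.one_def]
    rfl
  refine ⟨⟨⟨fun v => fwd (v : G), fun t => ⟨bwd t, hbwd_mem t⟩, ?_, ?_⟩, ?_⟩⟩
  · -- left inverse
    rintro ⟨v, hv⟩
    apply Subtype.ext
    show bwd (fwd v) = v
    by_cases hv1 : v = 1
    · subst hv1
      show bwd (if (1:G) = 1 then _ else _) = 1
      rw [if_pos rfl]
    · have hφv : φ v ≠ 1 := hphi_ne v hv hv1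
      have hfwd : fwd v = lab (eD.symm (φ v)) (idx H e2 v) := if_neg hv1
      rcases ht : eD.symm (φ v) with j | (j | k)
      · exact absurd ht (hnotinl v hφv j)
      · have hφv' : φ v = d8of (.inr (.inl j)) := by
          have h := (Equiv.apply_symm_apply eD (φ v)).symm
          rw [ht] at h; exact h
        rw [ht] at hfwd
        rw [hfwd]
        show W H iso e2 (d8of (.inr (.inl (e6.symm (e6 (j, idx H e2 v))).1)))
            (e6.symm (e6 (j, idx H e2 v))).2 = v
        rw [Equiv.symm_apply_apply, ← hφv']
        exact W_phi_idx H iso e2 v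
      · have hφv' : φ v = d8of (.inr (.inr k)) := by
          have h := (Equiv.apply_symm_apply eD (φ v)).symm
          rw [ht] at h; exact h
        rw [ht] at hfwd
        rw [hfwd]
        show W H iso e2 (d8of (.inr (.inr k))) (idx H e2 v) = v
        rw [← hφv']
        exact W_phi_idx H iso e2 v
  · -- right inverse
    rintro t
    show fwd (bwd t) = t
    rcases t with j | (j | ⟨k, i⟩)
    · show (if (1:G) = 1 then _ else _) = _
      rw [if_pos rfl]
      exact congrArg Sum.inl (Subsingleton.elim _ _)
    · show fwd (W H iso e2 (d8of (.inr (.inl (e6.symm j).1))) (e6.symm j).2) = _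
      rw [hfwd_W]
      show Sum.inr (Sum.inl (e6 ((e6.symm j).1, (e6.symm j).2))) = _
      rw [Prod.mk.eta, Equiv.apply_symm_apply]
    · show fwd (W H iso e2 (d8of (.inr (.inr k))) i) = _
      rw [hfwd_W]
      rfl
  · -- adjacency
    rintro ⟨u, hu⟩ ⟨v, hv⟩
    show (graphJoin (kGraph 1) (SimpleGraph.sum (kGraph 6) (unionKGraph 4 2))).Adj
        (fwd u) (fwd v) ↔ (u ≠ v ∧
          ((∃ m : ℕ, 0 < m ∧ (QuotientGroup.mk u : G ⧸ H) = QuotientGroup.mk (v ^ m)) ∨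
          (∃ n : ℕ, 0 < n ∧ (QuotientGroup.mk v : G ⧸ H) = QuotientGroup.mk (u ^ n))))
    have hR : ((∃ m : ℕ, 0 < m ∧ (QuotientGroup.mk u : G ⧸ H) = QuotientGroup.mk (v ^ m)) ∨
        (∃ n : ℕ, 0 < n ∧ (QuotientGroup.mk v : G ⧸ H) = QuotientGroup.mk (u ^ n))) ↔
        R' (φ u) (φ v) := by
      rw [← Rchar]
      apply or_congr
      · apply exists_congr; intro m
        rw [phi_eq_iff H iso, map_pow, ← hφ]
      · apply exists_congr; intro n
        rw [phi_eq_iff H iso, map_pow, ← hφ]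
    rw [hR]
    by_cases hu1 : u = 1 <;> by_cases hv1 : v = 1
    · subst hu1; subst hv1
      have : fwd (1:G) = .inl 0 := if_pos rfl
      rw [this]
      show (kGraph 1).Adj 0 0 ↔ _
      exact iff_of_false (fun h => h rfl) (fun h => h.1 rfl)
    · subst hu1
      have h1 : fwd (1:G) = .inl 0 := if_pos rfl
      have hφv : φ v ≠ 1 := hphi_ne v hv hv1
      have h2 : fwd v = lab (eD.symm (φ v)) (idx H e2 v) := if_neg hv1
      rcases ht : eD.symm (φ v) with j | (j | k)
      · exact absurd ht (hnotinl v hφv j)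
      all_goals {
        rw [ht] at h2
        rw [h1, h2]
        show True ↔ _
        simp only [true_iff, map_one]
        refine ⟨fun h => hv1 h.symm, one_R' _⟩
      }
    · subst hv1
      have h1 : fwd (1:G) = .inl 0 := if_pos rfl
      have hφu : φ u ≠ 1 := hphi_ne u hu hu1
      have h2 : fwd u = lab (eD.symm (φ u)) (idx H e2 u) := if_neg hu1
      rcases ht : eD.symm (φ u) with j | (j | k)
      · exact absurd ht (hnotinl u hφu j)
      all_goals {
        rw [ht] at h2
        rw [h1, h2]
        show True ↔ _
        simp only [true_iff, map_one]
        exact ⟨hu1, R'_one _⟩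
      }
    · have hφu : φ u ≠ 1 := hphi_ne u hu hu1
      have hφv : φ v ≠ 1 := hphi_ne v hv hv1
      have h2u : fwd u = lab (eD.symm (φ u)) (idx H e2 u) := if_neg hu1
      have h2v : fwd v = lab (eD.symm (φ v)) (idx H e2 v) := if_neg hv1
      rcases htu : eD.symm (φ u) with j | (ju | ku)
      · exact absurd htu (hnotinl u hφu j)
      all_goals rcases htv : eD.symm (φ v) with j' | (jv | kv)
      · exact absurd htv (hnotinl v hφv j')
      pick_goal 3
      · exact absurd htv (hnotinl v hφv j')
      all_goals (
        rw [htu] at h2u;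
        rw [htv] at h2v;
        have hφu' := (Equiv.apply_symm_apply eD (φ u)).symm;
        have hφv' := (Equiv.apply_symm_apply eD (φ v)).symm;
        rw [htu] at hφu';
        rw [htv] at hφv';
        rw [h2u, h2v, hφu', hφv'])
      -- rotation-rotation
      · show e6 (ju, idx H e2 u) ≠ e6 (jv, idx H e2 v) ↔ _
        constructor
        · intro hne
          refine ⟨fun h => ?_, rot_adj ju jv⟩
          rw [h] at htu
          rw [htu] at htv
          injection htv with h1
          injection h1 with h2
          exact hne (by rw [h, h2])
        · rintro ⟨hne, -⟩ h
          apply hne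
          have hp := e6.injective h
          have hj : ju = jv := congrArg Prod.fst hp
          refine phi_idx_inj H iso e2 ?_ (congrArg Prod.snd hp)
          rw [hφu', hφv', hj]
      -- rotation-reflection
      · exact iff_of_false Bool.false_ne_true (fun h => mixed1 ju kv h.2)
      -- reflection-rotation
      · exact iff_of_false Bool.false_ne_true (fun h => mixed2 ku jv h.2)
      -- reflection-reflection
      · show (ku = kv ∧ idx H e2 u ≠ idx H e2 v) ↔ _
        constructor
        · rintro ⟨hk, hi⟩
          subst hk
          refine ⟨fun h => hi (by rw [h]), (refl_adj ku ku).mpr rfl⟩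
        · rintro ⟨hne, hr⟩
          have hk : ku = kv := (refl_adj ku kv).mp hr
          subst hk
          refine ⟨rfl, fun hi => hne ?_⟩
          exact phi_idx_inj H iso e2 (by rw [hφu', hφv']) hi
end

section
/- Let G be a finite group and H a normal subgroup of G with |H| = 3 such that the quotient group G/H has at least four distinct cyclic subgroups of order 3, generated by a_1H, a_2H, a_3H, a_4H respectively. Then the subgraph of the normal subgroup based power graph Γ_H(G) induced by the set (a_1H ∪ a_2H ∪ a_3H ∪ a_4H) ∪ (a_1^2H ∪ a_2^2H ∪ a_3^2H ∪ a_4^2H) ∪ {e} is isomorphic to the join K_1 ∨ 4K_6. -/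
lemma aux_sq {K : Type*} [Group K] {x : K} (hx : x ^ 3 = 1) {e : ℕ}
    (he : e = 1 ∨ e = 2) : (x ^ e) ^ e = x := by
  rcases he with rfl | rfl
  · simp
  · rw [← pow_mul]
    show x ^ 4 = x
    rw [show (4:ℕ) = 3 + 1 by rfl, pow_succ, hx, one_mul]

/-- If `|H| = 3` and `G/H` has four distinct cyclic subgroups of order 3
generated by `a₁H, a₂H, a₃H, a₄H`, then the subgraph of `Γ_H(G)` induced by
`(⋃ aᵢH) ∪ (⋃ aᵢ²H) ∪ {e}` is isomorphic to `K₁ ∨ 4K₆`. -/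
theorem statement_17 {G : Type*} [Group G] [Fintype G] (H : Subgroup G) [H.Normal]
    (hcard : Nat.card H = 3) (a : Fin 4 → G)
    (hord : ∀ i, orderOf (QuotientGroup.mk (a i) : G ⧸ H) = 3)
    (hdist : ∀ i j, i ≠ j →
      Subgroup.zpowers (QuotientGroup.mk (a i) : G ⧸ H) ≠
        Subgroup.zpowers (QuotientGroup.mk (a j) : G ⧸ H)) :
    Nonempty (((nsbPowerGraph G H).induce
      {v : nsbVertexSet H |
        (∃ i, (QuotientGroup.mk (v : G) : G ⧸ H) = QuotientGroup.mk (a i) ∨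
          (QuotientGroup.mk (v : G) : G ⧸ H) = QuotientGroup.mk ((a i) ^ 2)) ∨ (v : G) = 1})
      ≃g graphJoin (kGraph 1) (unionKGraph 4 6)) := by
  classical
  haveI : Fintype H := Fintype.ofFinite _
  have hcard' : Fintype.card H = 3 := by rw [← Nat.card_eq_fintype_card]; exact hcard
  have hh : (H : Type _) ≃ Fin 3 := Fintype.equivFinOfCardEq hcard'
  set x : Fin 4 → G ⧸ H := fun i => QuotientGroup.mk (a i) with hxdef
  have hord' : ∀ i, orderOf (x i) = 3 := fun i => hord i
  have hx3 : ∀ i, x i ^ 3 = 1 := fun i => by rw [← hord' i]; exact pow_orderOf_eq_one _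
  have hpne : ∀ i (e : ℕ), e = 1 ∨ e = 2 → x i ^ e ≠ 1 := by
    intro i e he h
    have hdvd := orderOf_dvd_of_pow_eq_one h
    rw [hord' i] at hdvd
    have := Nat.le_of_dvd (by omega) hdvd
    omega
  have hcross : ∀ i i' (e e' : ℕ), e = 1 ∨ e = 2 → e' = 1 ∨ e' = 2 → i ≠ i' →
      ∀ m : ℕ, x i ^ e ≠ (x i' ^ e') ^ m := by
    intro i i' e e' he he' hne m heq
    have h1 : x i ∈ Subgroup.zpowers (x i') := by
      have hxe : x i = (x i') ^ (e' * m * e) := by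
        rw [pow_mul, pow_mul, ← heq, aux_sq (hx3 i) he]
      rw [hxe]
      exact Subgroup.pow_mem _ (Subgroup.mem_zpowers _) _
    have hle : Subgroup.zpowers (x i) ≤ Subgroup.zpowers (x i') :=
      Subgroup.zpowers_le.mpr h1
    have hcards : Nat.card (Subgroup.zpowers (x i')) ≤ Nat.card (Subgroup.zpowers (x i)) := by
      rw [Nat.card_zpowers, Nat.card_zpowers, hord', hord']
    exact hdist i i' hne (Subgroup.eq_of_le_of_card_ge hle hcards)
  set E : Fin 6 → ℕ := fun j => if (j : ℕ) < 3 then 1 else 2 with hEdef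
  have hE : ∀ j, E j = 1 ∨ E j = 2 := by
    intro j
    rw [hEdef]
    dsimp only
    split <;> simp
  set g : Fin 4 × Fin 6 → G :=
    fun p => a p.1 ^ E p.2 * ((hh.symm ⟨(p.2 : ℕ) % 3, by omega⟩ : H) : G) with hgdef
  have hgmk : ∀ p, (QuotientGroup.mk (g p) : G ⧸ H) = x p.1 ^ E p.2 := by
    intro p
    rw [hgdef]
    dsimp only
    rw [QuotientGroup.mk_mul, QuotientGroup.mk_pow,
      (QuotientGroup.eq_one_iff _).mpr (SetLike.coe_mem _), mul_one]
  -- injectivity of g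
  have hginj : Function.Injective g := by
    rintro ⟨i, j⟩ ⟨i', j'⟩ hg
    have hmk : x i ^ E j = x i' ^ E j' := by
      rw [← hgmk ⟨i, j⟩, ← hgmk ⟨i', j'⟩, hg]
    by_cases hi : i = i'
    · subst hi
      have hEeq : E j = E j' := by
        have hmod := pow_eq_pow_iff_modEq.mp hmk
        rw [hord'] at hmod
        rcases hE j with h1 | h1 <;> rcases hE j' with h2 | h2 <;> rw [h1, h2] <;>
          rw [h1, h2] at hmod <;> first | rfl | (exact absurd hmod (by decide))
      have hcoset : ((hh.symm ⟨(j : ℕ) % 3, by omega⟩ : H) : G)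
          = ((hh.symm ⟨(j' : ℕ) % 3, by omega⟩ : H) : G) := by
        have hg' := hg
        rw [hgdef] at hg'
        dsimp only at hg'
        rw [hEeq] at hg'
        exact mul_left_cancel hg'
      have hmod3 : (j : ℕ) % 3 = (j' : ℕ) % 3 :=
        congrArg Fin.val (hh.symm.injective (Subtype.coe_injective hcoset))
      have hlt : ((j : ℕ) < 3 ↔ (j' : ℕ) < 3) := by
        constructor <;> intro hb <;> by_contra hb'
        · rw [hEdef] at hEeq; simp [hb, hb'] at hEeq
        · rw [hEdef] at hEeq; simp [hb, hb'] at hEeq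
      have hj : (j : ℕ) = (j' : ℕ) := by
        rcases Classical.em ((j : ℕ) < 3) with hb | hb
        · have hb' := hlt.mp hb; omega
        · have hb' : ¬ (j' : ℕ) < 3 := fun h => hb (hlt.mpr h)
          have := j.isLt; have := j'.isLt
          omega
      exact Prod.ext rfl (Fin.ext hj)
    · exact absurd (by rw [pow_one]; exact hmk : x i ^ E j = (x i' ^ E j') ^ 1)
        (hcross i i' _ _ (hE j) (hE j') hi 1)
  set S : Set (nsbVertexSet H) :=
    {v : nsbVertexSet H |
        (∃ i, (QuotientGroup.mk (v : G) : G ⧸ H) = QuotientGroup.mk (a i) ∨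
          (QuotientGroup.mk (v : G) : G ⧸ H) = QuotientGroup.mk ((a i) ^ 2)) ∨ (v : G) = 1}
    with hSdef
  have hmemV : ∀ p : Fin 4 × Fin 6, g p ∈ nsbVertexSet H := by
    intro p
    left
    intro hmem
    exact hpne p.1 _ (hE p.2) (by rw [← hgmk p]; exact (QuotientGroup.eq_one_iff _).mpr hmem)
  have hmemS : ∀ p : Fin 4 × Fin 6, (⟨g p, hmemV p⟩ : nsbVertexSet H) ∈ S := by
    intro p
    left
    refine ⟨p.1, ?_⟩
    rcases hE p.2 with h | h
    · left
      rw [show ((⟨g p, hmemV p⟩ : nsbVertexSet H) : G) = g p from rfl, hgmk p, h, pow_one]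
    · right
      rw [show ((⟨g p, hmemV p⟩ : nsbVertexSet H) : G) = g p from rfl, hgmk p, h,
        QuotientGroup.mk_pow]
  have h1V : (1 : G) ∈ nsbVertexSet H := Or.inr rfl
  have h1S : (⟨1, h1V⟩ : nsbVertexSet H) ∈ S := Or.inr rfl
  set f : (Fin 1 ⊕ Fin 4 × Fin 6) → S := fun u =>
    match u with
    | Sum.inl _ => ⟨⟨1, h1V⟩, h1S⟩
    | Sum.inr p => ⟨⟨g p, hmemV p⟩, hmemS p⟩
    with hfdef
  have hne1 : ∀ p : Fin 4 × Fin 6, (1 : G) ≠ g p := by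
    intro p h
    exact hpne p.1 _ (hE p.2) (by rw [← hgmk p, ← h, QuotientGroup.mk_one])
  have hbij : Function.Bijective f := by
    constructor
    · rintro (z | p) (z' | p') huv
      · exact congrArg Sum.inl (Subsingleton.elim _ _)
      · exact absurd (congrArg (fun v : S => ((v : nsbVertexSet H) : G)) huv)
          (hne1 p')
      · exact absurd (congrArg (fun v : S => ((v : nsbVertexSet H) : G)) huv).symm
          (hne1 p)
      · exact congrArg Sum.inr
          (hginj (congrArg (fun v : S => ((v : nsbVertexSet H) : G)) huv))
    · rintro ⟨⟨w, hwV⟩, hwS⟩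
      rcases hwS with ⟨i, hi | hi⟩ | h1
      · -- w H = a i H
        have hmem : (a i)⁻¹ * w ∈ H := QuotientGroup.eq.mp hi.symm
        set t : Fin 3 := hh ⟨(a i)⁻¹ * w, hmem⟩ with htdef
        refine ⟨Sum.inr (i, ⟨(t : ℕ), by omega⟩), Subtype.ext (Subtype.ext ?_)⟩
        show g (i, ⟨(t : ℕ), by omega⟩) = w
        rw [hgdef]
        dsimp only
        have h1' : E ⟨(t : ℕ), by omega⟩ = 1 := by
          rw [hEdef]; exact if_pos t.isLt
        have h2' : (⟨((⟨(t : ℕ), by omega⟩ : Fin 6) : ℕ) % 3, by omega⟩ : Fin 3) = t :=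
          Fin.ext (Nat.mod_eq_of_lt t.isLt)
        rw [h1', h2', htdef, Equiv.symm_apply_apply, pow_one, ← mul_assoc,
          mul_inv_cancel, one_mul]
      · -- w H = a i ^ 2 H
        have hmem : (a i ^ 2)⁻¹ * w ∈ H := QuotientGroup.eq.mp hi.symm
        set t : Fin 3 := hh ⟨(a i ^ 2)⁻¹ * w, hmem⟩ with htdef
        refine ⟨Sum.inr (i, ⟨3 + (t : ℕ), by omega⟩), Subtype.ext (Subtype.ext ?_)⟩
        show g (i, ⟨3 + (t : ℕ), by omega⟩) = w
        rw [hgdef]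
        dsimp only
        have h1' : E ⟨3 + (t : ℕ), by omega⟩ = 2 := by
          rw [hEdef]; exact if_neg (show ¬ 3 + (t : ℕ) < 3 by omega)
        have h2' : (⟨((⟨3 + (t : ℕ), by omega⟩ : Fin 6) : ℕ) % 3, by omega⟩ : Fin 3) = t := by
          apply Fin.ext
          simp only [Fin.val_mk]
          have := t.isLt
          omega
        rw [h1', h2', htdef, Equiv.symm_apply_apply, ← mul_assoc, mul_inv_cancel, one_mul]
      · exact ⟨Sum.inl 0, Subtype.ext (Subtype.ext h1.symm)⟩
  -- adjacency facts
  have adj_one : ∀ p : Fin 4 × Fin 6,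
      ((nsbPowerGraph G H).induce S).Adj ⟨⟨1, h1V⟩, h1S⟩ ⟨⟨g p, hmemV p⟩, hmemS p⟩ := by
    intro p
    refine ⟨hne1 p, Or.inl ⟨3, by norm_num, ?_⟩⟩
    show (QuotientGroup.mk (1 : G) : G ⧸ H) = QuotientGroup.mk (g p ^ 3)
    rw [QuotientGroup.mk_one, QuotientGroup.mk_pow, hgmk, ← pow_mul, mul_comm, pow_mul,
      hx3, one_pow]
  have adj_block : ∀ p p' : Fin 4 × Fin 6, p.1 = p'.1 → p.2 ≠ p'.2 →
      ((nsbPowerGraph G H).induce S).Adj ⟨⟨g p, hmemV p⟩, hmemS p⟩ ⟨⟨g p', hmemV p'⟩, hmemS p'⟩ := by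
    intro p p' hi hj
    refine ⟨fun h => hj (congrArg Prod.snd (hginj h)), Or.inl ⟨E p'.2 * E p.2, ?_, ?_⟩⟩
    · rcases hE p'.2 with h | h <;> rcases hE p.2 with h' | h' <;> rw [h, h'] <;> norm_num
    · show (QuotientGroup.mk (g p) : G ⧸ H) = QuotientGroup.mk (g p' ^ (E p'.2 * E p.2))
      rw [QuotientGroup.mk_pow, hgmk, hgmk, hi, pow_mul, aux_sq (hx3 p'.1) (hE p'.2)]
  have nadj_cross : ∀ p p' : Fin 4 × Fin 6, p.1 ≠ p'.1 →
      ¬ ((nsbPowerGraph G H).induce S).Adj ⟨⟨g p, hmemV p⟩, hmemS p⟩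
        ⟨⟨g p', hmemV p'⟩, hmemS p'⟩ := by
    intro p p' hi hadj
    obtain ⟨-, h⟩ := hadj
    have h' : (∃ m : ℕ, 0 < m ∧
          (QuotientGroup.mk (g p) : G ⧸ H) = QuotientGroup.mk (g p' ^ m)) ∨
        (∃ n : ℕ, 0 < n ∧
          (QuotientGroup.mk (g p') : G ⧸ H) = QuotientGroup.mk (g p ^ n)) := h
    rcases h' with ⟨m, -, heq⟩ | ⟨n, -, heq⟩
    · rw [QuotientGroup.mk_pow, hgmk, hgmk] at heq
      exact hcross p.1 p'.1 _ _ (hE p.2) (hE p'.2) hi m heq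
    · rw [QuotientGroup.mk_pow, hgmk, hgmk] at heq
      exact hcross p'.1 p.1 _ _ (hE p'.2) (hE p.2) (Ne.symm hi) n heq
  refine ⟨SimpleGraph.Iso.symm ⟨Equiv.ofBijective f hbij, ?_⟩⟩
  intro u v
  rcases u with z | p <;> rcases v with z' | p'
  · constructor
    · intro h
      exact (SimpleGraph.irrefl _ h).elim
    · intro h
      exact absurd (Subsingleton.elim z z') (h : z ≠ z')
  · constructor
    · intro _; exact trivial
    · intro _; exact adj_one p'
  · constructor
    · intro _; exact trivial
    · intro _; exact (adj_one p).symm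
  · constructor
    · intro h
      by_cases hi : p.1 = p'.1
      · refine ⟨hi, ?_⟩
        intro hj
        have hpp : p = p' := Prod.ext hi hj
        rw [hpp] at h
        exact SimpleGraph.irrefl _ h
      · exact absurd h (nadj_cross p p' hi)
    · intro h
      obtain ⟨hi, hj⟩ := h
      exact adj_block p p' hi hj
end

section
/- Let G be a finite group and H a normal subgroup of G with |H| = n such that the quotient group G/H is isomorphic to the Klein four-group Z_2 × Z_2. Then the normal subgroup based power graph Γ_H(G) is isomorphic to the graph K_1 ∨ 3K_n. -/
/-- If `|H| = n` and `G/H ≅ Z₂ × Z₂`, then `Γ_H(G) ≅ K₁ ∨ 3Kₙ`. -/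
theorem statement_18 {G : Type*} [Group G] [Fintype G] (H : Subgroup G) [H.Normal]
    (n : ℕ) (hcard : Nat.card H = n)
    (hq : Nonempty (G ⧸ H ≃* Multiplicative (ZMod 2) × Multiplicative (ZMod 2))) :
    Nonempty (nsbPowerGraph G H ≃g graphJoin (kGraph 1) (unionKGraph 3 n)) := by
  classical
  obtain ⟨φ⟩ := hq
  have hK : ∀ t : Multiplicative (ZMod 2) × Multiplicative (ZMod 2), t ^ 2 = 1 := by decide
  have hsq : ∀ q : G ⧸ H, q ^ 2 = 1 := fun q =>
    φ.injective (by rw [map_pow, map_one]; exact hK _)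
  have hpow : ∀ (q : G ⧸ H) (m : ℕ), 0 < m → q ^ m = q ∨ q ^ m = 1 := by
    intro q m _
    rcases Nat.even_or_odd m with he | ho
    · right
      obtain ⟨k, rfl⟩ := he
      rw [← two_mul, pow_mul, hsq, one_pow]
    · left
      obtain ⟨k, rfl⟩ := ho
      rw [pow_add, pow_mul, hsq, one_pow, pow_one, one_mul]
  -- membership facts
  have hmem1 : ∀ x : nsbVertexSet H, (x : G) ∈ H → (x : G) = 1 := by
    rintro ⟨x, hx | hx⟩ hmem
    · exact absurd hmem hx
    · exact hx
  -- adjacency characterization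
  have hadj : ∀ a b : nsbVertexSet H, (nsbPowerGraph G H).Adj a b ↔
      ((a : G) ≠ (b : G) ∧ ((a : G) = 1 ∨ (b : G) = 1 ∨
        (QuotientGroup.mk (a : G) : G ⧸ H) = QuotientGroup.mk (b : G))) := by
    intro a b
    constructor
    · rintro ⟨hne, h⟩
      refine ⟨hne, ?_⟩
      rcases h with ⟨m, hm, hab⟩ | ⟨m, hm, hab⟩
      · rw [QuotientGroup.mk_pow] at hab
        rcases hpow (QuotientGroup.mk (b : G)) m hm with h' | h'
        · rw [h'] at hab; exact Or.inr (Or.inr hab)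
        · rw [h'] at hab
          exact Or.inl (hmem1 a ((QuotientGroup.eq_one_iff _).mp hab))
      · rw [QuotientGroup.mk_pow] at hab
        rcases hpow (QuotientGroup.mk (a : G)) m hm with h' | h'
        · rw [h'] at hab; exact Or.inr (Or.inr hab.symm)
        · rw [h'] at hab
          exact Or.inr (Or.inl (hmem1 b ((QuotientGroup.eq_one_iff _).mp hab)))
    · rintro ⟨hne, h1 | h1 | h1⟩
      · refine ⟨hne, Or.inl ⟨2, by norm_num, ?_⟩⟩
        rw [QuotientGroup.mk_pow, hsq, h1, QuotientGroup.mk_one]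
      · refine ⟨hne, Or.inr ⟨2, by norm_num, ?_⟩⟩
        rw [QuotientGroup.mk_pow, hsq, h1, QuotientGroup.mk_one]
      · exact ⟨hne, Or.inl ⟨1, by norm_num, by rw [pow_one]; exact h1⟩⟩
  -- equivs
  have hT3 : Nat.card {t : Multiplicative (ZMod 2) × Multiplicative (ZMod 2) // t ≠ 1} = 3 := by
    simp [Nat.card_eq_fintype_card]
  let eT : {t : Multiplicative (ZMod 2) × Multiplicative (ZMod 2) // t ≠ 1} ≃ Fin 3 :=
    Finite.equivFinOfCardEq hT3
  let eH : H ≃ Fin n := Finite.equivFinOfCardEq hcard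
  -- coset representatives
  have hg : ∀ q : G ⧸ H, (QuotientGroup.mk q.out : G ⧸ H) = q := fun q => QuotientGroup.out_eq' q
  -- the forward map pieces
  have hne1 : ∀ x : G, x ∉ H → φ (QuotientGroup.mk x) ≠ 1 := by
    intro x hx hc
    exact hx ((QuotientGroup.eq_one_iff x).mp (φ.injective (by simpa using hc)))
  have hcoset : ∀ x : G, ((QuotientGroup.mk x : G ⧸ H).out)⁻¹ * x ∈ H := fun x =>
    QuotientGroup.eq.mp (hg (QuotientGroup.mk x))
  have hFinvMem : ∀ (i : Fin 3) (j : Fin n),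
      (φ.symm ↑(eT.symm i) : G ⧸ H).out * ↑(eH.symm j) ∈ nsbVertexSet H := by
    intro i j
    left
    intro hmem
    apply (eT.symm i).2
    have h2 : (QuotientGroup.mk ((φ.symm ↑(eT.symm i) : G ⧸ H).out * ↑(eH.symm j)) : G ⧸ H) = 1 :=
      (QuotientGroup.eq_one_iff _).mpr hmem
    rw [QuotientGroup.mk_mul, hg, (QuotientGroup.eq_one_iff _).mpr (eH.symm j).2, mul_one] at h2
    have := congrArg φ h2
    simpa using this
  let F : nsbVertexSet H → Fin 1 ⊕ Fin 3 × Fin n := fun x =>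
    if h : (x : G) ∈ H then Sum.inl 0
    else Sum.inr (eT ⟨φ (QuotientGroup.mk (x : G)), hne1 _ h⟩,
      eH ⟨((QuotientGroup.mk (x : G) : G ⧸ H).out)⁻¹ * (x : G), hcoset _⟩)
  let Finv : Fin 1 ⊕ Fin 3 × Fin n → nsbVertexSet H := fun y =>
    match y with
    | Sum.inl _ => ⟨1, Or.inr rfl⟩
    | Sum.inr (i, j) => ⟨(φ.symm ↑(eT.symm i) : G ⧸ H).out * ↑(eH.symm j), hFinvMem i j⟩
  have hleft : Function.LeftInverse Finv F := by
    intro x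
    by_cases h : (x : G) ∈ H
    · have hx1 := hmem1 x h
      simp only [F, dif_pos h, Finv]
      exact Subtype.ext hx1.symm
    · simp only [F, dif_neg h, Finv]
      apply Subtype.ext
      simp only [Equiv.symm_apply_apply]
      rw [MulEquiv.symm_apply_apply]
      exact mul_inv_cancel_left _ _
  have hright : Function.RightInverse Finv F := by
    rintro (i | ⟨i, j⟩)
    · have h1 : ((1 : G)) ∈ H := one_mem H
      simp only [Finv, F, dif_pos h1]
      exact congrArg Sum.inl (Subsingleton.elim _ _)
    · have hmem : ((φ.symm ↑(eT.symm i) : G ⧸ H).out * ↑(eH.symm j) : G) ∉ H := by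
        rcases hFinvMem i j with h | h
        · exact h
        · exfalso
          apply (eT.symm i).2
          have h2 : (QuotientGroup.mk ((φ.symm ↑(eT.symm i) : G ⧸ H).out * ↑(eH.symm j)) : G ⧸ H) = 1 := by
            rw [h, QuotientGroup.mk_one]
          rw [QuotientGroup.mk_mul, hg, (QuotientGroup.eq_one_iff _).mpr (eH.symm j).2, mul_one] at h2
          simpa using congrArg φ h2
      simp only [Finv, F, dif_neg hmem]
      have hmk : (QuotientGroup.mk ((φ.symm ↑(eT.symm i) : G ⧸ H).out * ↑(eH.symm j) : G) : G ⧸ H)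
          = φ.symm ↑(eT.symm i) := by
        rw [QuotientGroup.mk_mul, hg, (QuotientGroup.eq_one_iff _).mpr (eH.symm j).2, mul_one]
      congr 1
      refine Prod.ext ?_ ?_
      · show eT ⟨_, _⟩ = i
        have : (⟨φ (QuotientGroup.mk _), hne1 _ hmem⟩ :
            {t : Multiplicative (ZMod 2) × Multiplicative (ZMod 2) // t ≠ 1}) = eT.symm i := by
          apply Subtype.ext
          show φ (QuotientGroup.mk _) = _
          rw [hmk]
          simp
        rw [this, Equiv.apply_symm_apply]
      · show eH ⟨_, _⟩ = j
        have : (⟨((QuotientGroup.mk ((φ.symm ↑(eT.symm i) : G ⧸ H).out * ↑(eH.symm j) : G) : G ⧸ H).out)⁻¹ *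
            ((φ.symm ↑(eT.symm i) : G ⧸ H).out * ↑(eH.symm j) : G), hcoset _⟩ : H) = eH.symm j := by
          apply Subtype.ext
          show _ * _ = _
          rw [hmk]
          exact inv_mul_cancel_left _ _
        rw [this, Equiv.apply_symm_apply]
  refine ⟨⟨⟨F, Finv, hleft, hright⟩, ?_⟩⟩
  intro a b
  show (graphJoin (kGraph 1) (unionKGraph 3 n)).Adj (F a) (F b) ↔ (nsbPowerGraph G H).Adj a b
  rw [hadj]
  by_cases ha : (a : G) ∈ H <;> by_cases hb : (b : G) ∈ H
  · have ha1 := hmem1 a ha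
    have hb1 := hmem1 b hb
    simp only [F, dif_pos ha, dif_pos hb]
    constructor
    · rintro h
      exact absurd h (by simp [graphJoin, kGraph])
    · rintro ⟨hne, -⟩
      exact absurd (ha1.trans hb1.symm) hne
  · have ha1 := hmem1 a ha
    simp only [F, dif_pos ha, dif_neg hb]
    constructor
    · intro _
      refine ⟨?_, Or.inl ha1⟩
      intro h
      rw [← h, ha1] at hb
      exact hb (one_mem H)
    · intro _
      trivial
  · have hb1 := hmem1 b hb
    simp only [F, dif_neg ha, dif_pos hb]
    constructor
    · intro _
      refine ⟨?_, Or.inr (Or.inl hb1)⟩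
      intro h
      rw [h, hb1] at ha
      exact ha (one_mem H)
    · intro _
      trivial
  · simp only [F, dif_neg ha, dif_neg hb]
    have ha1 : (a : G) ≠ 1 := fun h => ha (h ▸ one_mem H)
    have hb1 : (b : G) ≠ 1 := fun h => hb (h ▸ one_mem H)
    show (unionKGraph 3 n).Adj _ _ ↔ _
    simp only [unionKGraph]
    have key1 : ∀ (p : φ (QuotientGroup.mk (a:G)) ≠ 1) (q : φ (QuotientGroup.mk (b:G)) ≠ 1),
        eT ⟨φ (QuotientGroup.mk (a:G)), p⟩ = eT ⟨φ (QuotientGroup.mk (b:G)), q⟩ ↔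
        (QuotientGroup.mk (a:G) : G ⧸ H) = QuotientGroup.mk (b:G) := by
      intro p q
      rw [Equiv.apply_eq_iff_eq, Subtype.mk.injEq]
      exact φ.apply_eq_iff_eq
    constructor
    · rintro ⟨h1, h2⟩
      have hqq : (QuotientGroup.mk (a:G) : G ⧸ H) = QuotientGroup.mk (b:G) := (key1 _ _).mp h1
      refine ⟨?_, Or.inr (Or.inr hqq)⟩
      intro hab
      exact h2 (congrArg eH (Subtype.ext (by rw [hab])))
    · rintro ⟨hne, h | h | h⟩
      · exact absurd h ha1
      · exact absurd h hb1
      · refine ⟨(key1 _ _).mpr h, ?_⟩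
        intro hEq
        apply hne
        have h2 : ((QuotientGroup.mk (a:G) : G ⧸ H).out)⁻¹ * (a:G)
            = ((QuotientGroup.mk (b:G) : G ⧸ H).out)⁻¹ * (b:G) :=
          Subtype.ext_iff.mp (eH.injective hEq)
        rw [h] at h2
        exact mul_left_cancel h2
end

section
/- Let G be a finite group and H a normal subgroup of G with |H| = n such that the quotient group G/H is isomorphic to an elementary abelian 2-group (Z_2)^k with k ≥ 3. Then, for any four distinct non-identity elements a_1H, a_2H, a_3H, a_4H of G/H, the subgraph of the normal subgroup based power graph Γ_H(G) induced by the set a_1H ∪ a_2H ∪ a_3H ∪ a_4H ∪ {e} is isomorphic to the join K_1 ∨ 4K_n. -/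
/-- If `|H| = n` and `G/H ≅ (Z₂)^k` with `k ≥ 3`, then for any four
distinct non-identity elements `a₁H, a₂H, a₃H, a₄H` of `G/H`, the subgraph of `Γ_H(G)`
induced by `a₁H ∪ a₂H ∪ a₃H ∪ a₄H ∪ {e}` is isomorphic to `K₁ ∨ 4Kₙ`. -/
theorem statement_19 {G : Type*} [Group G] [Fintype G] (H : Subgroup G) [H.Normal]
    (n : ℕ) (hcard : Nat.card H = n) (k : ℕ) (hk : 3 ≤ k)
    (hq : Nonempty (G ⧸ H ≃* (Fin k → Multiplicative (ZMod 2))))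
    (b : Fin 4 → G ⧸ H) (hinj : Function.Injective b) (hne1 : ∀ i, b i ≠ 1) :
    Nonempty (((nsbPowerGraph G H).induce
      {v : nsbVertexSet H |
        (∃ i, (QuotientGroup.mk (v : G) : G ⧸ H) = b i) ∨ (v : G) = 1})
      ≃g graphJoin (kGraph 1) (unionKGraph 4 n)) := by

  classical
  obtain ⟨eqv⟩ := hq
  -- every element of the quotient squares to 1
  have hsq : ∀ c : G ⧸ H, c ^ 2 = 1 := by
    intro c
    apply eqv.injective
    rw [map_pow, map_one]
    funext i
    have : ∀ y : Multiplicative (ZMod 2), y ^ 2 = 1 := by decide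
    simpa using this (eqv c i)
  have hpow : ∀ (c : G ⧸ H) (m : ℕ), c ^ m = 1 ∨ c ^ m = c := by
    intro c m
    rcases Nat.even_or_odd m with ⟨t, ht⟩ | ⟨t, ht⟩
    · left
      rw [ht, ← two_mul, pow_mul, hsq, one_pow]
    · right
      rw [ht, pow_succ, pow_mul, hsq, one_pow, one_mul]
  -- coset representatives
  set g : Fin 4 → G := fun i => (b i).out with hg
  have hgmk : ∀ i, (QuotientGroup.mk (g i) : G ⧸ H) = b i := fun i => QuotientGroup.out_eq' (b i)
  -- each coset is in bijection with H
  have cosEquiv : ∀ i : Fin 4,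
      {x : G // (QuotientGroup.mk x : G ⧸ H) = b i} ≃ H := by
    intro i
    refine ⟨fun x => ⟨(g i)⁻¹ * x, ?_⟩, fun h => ⟨g i * h, ?_⟩, ?_, ?_⟩
    · exact QuotientGroup.eq.mp ((hgmk i).trans x.2.symm)
    · rw [QuotientGroup.mk_mul, (QuotientGroup.eq_one_iff (h : G)).mpr h.2, mul_one, hgmk]
    · intro x; ext; simp
    · intro h; ext; simp
  have hcardcos : ∀ i : Fin 4,
      Nat.card {x : G // (QuotientGroup.mk x : G ⧸ H) = b i} = n := by
    intro i
    rw [Nat.card_congr (cosEquiv i), hcard]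
  have E : ∀ i : Fin 4, {x : G // (QuotientGroup.mk x : G ⧸ H) = b i} ≃ Fin n :=
    fun i => Finite.equivFinOfCardEq (hcardcos i)
  -- the vertex set of the induced subgraph
  set S : Set (nsbVertexSet H) :=
    {v : nsbVertexSet H |
      (∃ i, (QuotientGroup.mk (v : G) : G ⧸ H) = b i) ∨ (v : G) = 1} with hS
  -- the forward map
  have mem1 : (1 : G) ∈ nsbVertexSet H := Or.inr rfl
  have memcos : ∀ (i : Fin 4) (x : G), (QuotientGroup.mk x : G ⧸ H) = b i →
      x ∈ nsbVertexSet H := by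
    intro i x hx
    left
    intro hxH
    exact hne1 i (hx ▸ (QuotientGroup.eq_one_iff x).mpr hxH)
  let f : (Fin 1 ⊕ Fin 4 × Fin n) → S := fun u =>
    match u with
    | Sum.inl _ => ⟨⟨1, mem1⟩, Or.inr rfl⟩
    | Sum.inr (i, j) =>
        ⟨⟨((E i).symm j : G), memcos i _ ((E i).symm j).2⟩,
          Or.inl ⟨i, ((E i).symm j).2⟩⟩
  have hf1 : ∀ h : Fin 1, ((f (Sum.inl h) : nsbVertexSet H) : G) = 1 := fun _ => rfl
  have hf2 : ∀ (i : Fin 4) (j : Fin n),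
      ((f (Sum.inr (i, j)) : nsbVertexSet H) : G) = ((E i).symm j : G) := fun _ _ => rfl
  have hf2mk : ∀ (i : Fin 4) (j : Fin n),
      (QuotientGroup.mk ((f (Sum.inr (i, j)) : nsbVertexSet H) : G) : G ⧸ H) = b i :=
    fun i j => ((E i).symm j).2
  have hbij : Function.Bijective f := by
    constructor
    · rintro (h1 | ⟨i, j⟩) (h2 | ⟨i', j'⟩) heq
      · rw [Subsingleton.elim h1 h2]
      · exfalso
        have hx : ((E i').symm j' : G) = 1 := by
          have := congrArg (fun v : S => ((v : nsbVertexSet H) : G)) heq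
          simpa [hf1, hf2] using this.symm
        exact hne1 i' (by rw [← ((E i').symm j').2, hx, QuotientGroup.mk_one])
      · exfalso
        have hx : ((E i).symm j : G) = 1 := by
          have := congrArg (fun v : S => ((v : nsbVertexSet H) : G)) heq
          simpa [hf1, hf2] using this
        exact hne1 i (by rw [← ((E i).symm j).2, hx, QuotientGroup.mk_one])
      · have hG : ((E i).symm j : G) = ((E i').symm j' : G) := by
          have := congrArg (fun v : S => ((v : nsbVertexSet H) : G)) heq
          simpa [hf2] using this
        have hii : i = i' := by
          apply hinj
          rw [← ((E i).symm j).2, ← ((E i').symm j').2, hG]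
        subst hii
        have hjj : j = j' := by
          have : (E i).symm j = (E i).symm j' := Subtype.ext hG
          exact (E i).symm.injective this
        rw [hjj]
    · rintro ⟨⟨x, hxV⟩, hxS⟩
      rcases hxS with ⟨i, hi⟩ | hx1
      · refine ⟨Sum.inr (i, E i ⟨x, hi⟩), ?_⟩
        apply Subtype.ext; apply Subtype.ext
        show ((E i).symm (E i ⟨x, hi⟩) : G) = x
        rw [Equiv.symm_apply_apply]
      · exact ⟨Sum.inl 0, by apply Subtype.ext; apply Subtype.ext; exact hx1.symm⟩
  -- adjacency correspondence
  have hone : ∀ (i : Fin 4) (j : Fin n), ((E i).symm j : G) ≠ 1 := by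
    intro i j h
    exact hne1 i (by rw [← ((E i).symm j).2, h, QuotientGroup.mk_one])
  refine ⟨(SimpleGraph.Iso.symm ⟨Equiv.ofBijective f hbij, ?_⟩)⟩
  rintro (h1 | ⟨i, j⟩) (h2 | ⟨i', j'⟩)
  · have h12 : h1 = h2 := Subsingleton.elim _ _
    subst h12
    exact iff_of_false (SimpleGraph.irrefl _) (fun h => h rfl)
  · -- vertex 1 adjacent to coset vertex
    refine iff_of_true ⟨?_, Or.inl ⟨2, two_pos, ?_⟩⟩ trivial
    · exact fun h => hone i' j' (by simpa [hf1, hf2] using h.symm)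
    · show (QuotientGroup.mk (1 : G) : G ⧸ H) = QuotientGroup.mk (((E i').symm j' : G)) ^ 2
      rw [QuotientGroup.mk_one, ((E i').symm j').2, hsq]
  · refine iff_of_true ⟨?_, Or.inr ⟨2, two_pos, ?_⟩⟩ trivial
    · exact fun h => hone i j (by simpa [hf1, hf2] using h)
    · show (QuotientGroup.mk (1 : G) : G ⧸ H) = QuotientGroup.mk (((E i).symm j : G)) ^ 2
      rw [QuotientGroup.mk_one, ((E i).symm j).2, hsq]
  · -- two coset vertices
    constructor
    · rintro ⟨hne, hor⟩
      have hii : b i = b i' := by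
        rcases hor with ⟨m, hm, hmk⟩ | ⟨m, hm, hmk⟩
        · have hmk' : (QuotientGroup.mk (((E i).symm j : G)) : G ⧸ H) =
              QuotientGroup.mk ((((E i').symm j' : G)) ^ m) := hmk
          rw [((E i).symm j).2, QuotientGroup.mk_pow, ((E i').symm j').2] at hmk'
          rcases hpow (b i') m with h | h
          · exact absurd (hmk'.trans h) (hne1 i)
          · exact hmk'.trans h
        · have hmk' : (QuotientGroup.mk (((E i').symm j' : G)) : G ⧸ H) =
              QuotientGroup.mk ((((E i).symm j : G)) ^ m) := hmk
          rw [((E i').symm j').2, QuotientGroup.mk_pow, ((E i).symm j).2] at hmk'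
          rcases hpow (b i) m with h | h
          · exact absurd (hmk'.trans h) (hne1 i')
          · exact (hmk'.trans h).symm
      have hii' : i = i' := hinj hii
      subst hii'
      refine ⟨rfl, fun hjj => ?_⟩
      subst hjj
      exact (show ((E i).symm j : G) ≠ ((E i).symm j : G) from hne) rfl
    · rintro ⟨hii, hjj⟩
      have hii' : i = i' := hii
      subst hii'
      refine ⟨?_, Or.inl ⟨1, one_pos, ?_⟩⟩
      · intro h
        exact hjj ((E i).symm.injective (Subtype.ext h))
      · show (QuotientGroup.mk (((E i).symm j : G)) : G ⧸ H) =
          QuotientGroup.mk (((E i).symm j' : G)) ^ 1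
        rw [pow_one, ((E i).symm j).2, ((E i).symm j').2]
end
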